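/- arXiv:0812.4329 — 4 statements merged into one kernel-verified Lean document; each statement's English description precedes it below -/
import Mathlib

section
/- Let D be a strongly connected digraph with n > 2 vertices such that every vertex v satisfies d⁺(v) + d⁻(v) ≥ n. Then D is Hamiltonian. -/
/-- The Z-mapping graph of a digraph with arc relation `A`: a bipartite graph on
`V ⊕ V` where `Sum.inl u` (that is, `u⁺`) is adjacent to `Sum.inr v` (that is, `v⁻`)
iff `(u,v)` is an arc. -/
def Zmap {V : Type*} (A : V → V → Prop) : SimpleGraph (V ⊕ V) where
  Adj x y := (∃ u v, A u v ∧ x = Sum.inl u ∧ y = Sum.inr v) ∨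
             (∃ u v, A u v ∧ x = Sum.inr v ∧ y = Sum.inl u)
  symm := by
    constructor
    rintro x y (⟨u,v,h,h1,h2⟩|⟨u,v,h,h1,h2⟩)
    · exact Or.inr ⟨u,v,h,h2,h1⟩
    · exact Or.inl ⟨u,v,h,h2,h1⟩
  loopless := by constructor; rintro x (⟨u,v,_,h1,h2⟩|⟨u,v,_,h1,h2⟩) <;> simp_all

/-- A digraph is Hamiltonian if there is a cyclic permutation of all its vertices
that follows the arcs. -/
def DHamiltonian {V : Type*} [Fintype V] [DecidableEq V] (A : V → V → Prop) : Prop :=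
  ∃ σ : Equiv.Perm V, σ.IsCycle ∧ σ.support = Finset.univ ∧ ∀ v, A v (σ v)

/-- Out-degree in a digraph. -/
def outDeg {V : Type*} [Fintype V] (A : V → V → Prop) [DecidableRel A] (v : V) : ℕ :=
  (Finset.univ.filter (fun u => A v u)).card

/-- In-degree in a digraph. -/
def inDeg {V : Type*} [Fintype V] (A : V → V → Prop) [DecidableRel A] (v : V) : ℕ :=
  (Finset.univ.filter (fun u => A u v)).card


set_option linter.unusedSectionVars false
set_option linter.unusedVariables false

namespace GH

open List Finset

variable {V : Type*} [DecidableEq V]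

/-- cyclic chain predicate -/
def CycL (A : V → V → Prop) (L : List V) : Prop :=
  L.Chain' A ∧ ∀ h : L ≠ [], A (L.getLast h) (L.head h)

def HasCycL (A : V → V → Prop) (m : ℕ) : Prop :=
  ∃ L : List V, L.length = m ∧ L.Nodup ∧ CycL A L

lemma cyc_getElem {A : V → V → Prop} {L : List V} (h : CycL A L) {p : ℕ} (hp : p < L.length) :
    A (L[p]) (L[(p+1) % L.length]'(Nat.mod_lt _ (by omega))) := by
  rcases Nat.lt_or_ge (p+1) L.length with h1 | h1
  · have := List.isChain_iff_getElem.mp h.1 p (by omega)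
    simpa [List.get_eq_getElem, Nat.mod_eq_of_lt h1] using this
  · have hp1 : p = L.length - 1 := by omega
    have hne : L ≠ [] := by intro he; simp [he] at hp
    have hmod : (p+1) % L.length = 0 := by
      have : p + 1 = L.length := by omega
      simp [this]
    have := h.2 hne
    rw [List.getLast_eq_getElem] at this
    simp_rw [hmod, hp1]
    rwa [List.head_eq_getElem_zero hne] at this

lemma mod_two_cases {x l : ℕ} (h0 : 0 < l) (h : x < 2 * l) :
    x % l = if x < l then x else x - l := by
  rcases Nat.lt_or_ge x l with h1 | h1
  · simp [Nat.mod_eq_of_lt h1, h1]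
  · have : x % l = (x - l) % l := by
      conv_lhs => rw [show x = (x - l) + l by omega]
      simp [Nat.add_mod_right]
    rw [this, Nat.mod_eq_of_lt (by omega)]
    simp [Nat.not_lt.mpr h1]

lemma exists_nodup_path {r : V → V → Prop} {a b : V} (h : Relation.ReflTransGen r a b) :
    ∃ L : List V, L.Chain' r ∧ L.Nodup ∧ ∃ hne : L ≠ [], L.head hne = a ∧ L.getLast hne = b := by
  induction h using Relation.ReflTransGen.head_induction_on with
  | refl => exact ⟨[b], List.isChain_singleton _, by simp, by simp, by simp, by simp⟩
  | @head a' c hac hcb ih =>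
    obtain ⟨L, hch, hnd, hne, hhd, hlast⟩ := ih
    by_cases hmem : a' ∈ L
    · obtain ⟨s, t, rfl⟩ := List.append_of_mem hmem
      refine ⟨a' :: t, hch.suffix ⟨s, rfl⟩, ?_, by simp, by simp, ?_⟩
      · exact (List.nodup_append.mp hnd).2.1
      · rw [← hlast, List.getLast_append_of_ne_nil (l := s) (l' := a' :: t) _ (by simp)]
    · rcases L with _ | ⟨x, L'⟩
      · simp at hne
      · have hx : x = c := by simpa using hhd
        refine ⟨a' :: x :: L', List.isChain_cons_cons.mpr ⟨hx ▸ hac, hch⟩, by simp [hnd, hmem], by simp, by simp, ?_⟩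
        rw [List.getLast_cons (by simp)]
        exact hlast

lemma crossing {r : V → V → Prop} {P : V → Prop} {a b : V} (h : Relation.ReflTransGen r a b)
    (ha : P a) (hb : ¬ P b) : ∃ x y, P x ∧ ¬ P y ∧ r x y := by
  revert ha
  induction h using Relation.ReflTransGen.head_induction_on with
  | refl => exact fun ha => absurd ha hb
  | @head a' c hac hcb ih =>
    intro ha'
    by_cases hc : P c
    · exact ih hc
    · exact ⟨a', c, ha', hc, hac⟩

lemma mod_closure {l : ℕ} (h0 : 0 < l) (S : Finset ℕ) (hS : S ⊆ Finset.range l)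
    (hne : S.Nonempty) (hcl : ∀ x ∈ S, (x + 1) % l ∈ S) : S = Finset.range l := by
  obtain ⟨s₀, hs₀⟩ := hne
  have hstep : ∀ k : ℕ, (s₀ + k) % l ∈ S := by
    intro k
    induction k with
    | zero => simpa [Nat.mod_eq_of_lt (Finset.mem_range.mp (hS hs₀))] using hs₀
    | succ k ih =>
      have := hcl _ ih
      rw [Nat.mod_add_mod] at this
      rwa [show s₀ + (k+1) = s₀ + k + 1 by omega]
  apply Finset.Subset.antisymm hS
  intro j hj
  have hj' : j < l := Finset.mem_range.mp hj
  have hs₀' : s₀ < l := Finset.mem_range.mp (hS hs₀)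
  have := hstep (l - s₀ + j)
  rwa [show s₀ + (l - s₀ + j) = l + j by omega, Nat.add_mod_left, Nat.mod_eq_of_lt hj'] at this

lemma shiftGrow {l : ℕ} (h0 : 0 < l) (S : Finset ℕ) (hS : S ⊆ Finset.range l) (hne : S.Nonempty)
    {T : ℕ} (hT : 1 ≤ T) :
    min l (S.card + T - 1) ≤
      ((Finset.range T).biUnion (fun t => S.image (fun s => (s + t + 1) % l))).card := by
  set W : ℕ → Finset ℕ := fun T => (Finset.range (T+1)).biUnion (fun t => S.image (fun s => (s + t) % l)) with hW
  have hWsub : ∀ T, W T ⊆ Finset.range l := by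
    intro T x hx
    simp only [hW, Finset.mem_biUnion, Finset.mem_image] at hx
    obtain ⟨t, _, s, _, rfl⟩ := hx
    exact Finset.mem_range.mpr (Nat.mod_lt _ h0)
  have hW0 : W 0 = S := by
    ext x
    simp only [hW, Finset.mem_biUnion, Finset.mem_image, Finset.mem_range]
    constructor
    · rintro ⟨t, ht, s, hs, rfl⟩
      have ht0 : t = 0 := by omega
      subst ht0
      have : (s + 0) % l = s := by
        rw [Nat.add_zero, Nat.mod_eq_of_lt (Finset.mem_range.mp (hS hs))]
      rwa [this]
    · intro hx
      exact ⟨0, by omega, x, hx, by rw [Nat.add_zero, Nat.mod_eq_of_lt (Finset.mem_range.mp (hS hx))]⟩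
  have hWne : ∀ T, (W T).Nonempty := by
    intro T
    obtain ⟨s, hs⟩ := hne
    exact ⟨(s + 0) % l, by
      simp only [hW, Finset.mem_biUnion, Finset.mem_range, Finset.mem_image]
      exact ⟨0, by omega, s, hs, rfl⟩⟩
  have hWstep : ∀ T, W (T+1) = W T ∪ (W T).image (fun x => (x+1) % l) := by
    intro T
    ext x
    simp only [hW, Finset.mem_union, Finset.mem_biUnion, Finset.mem_image, Finset.mem_range]
    constructor
    · rintro ⟨t, ht, s, hs, rfl⟩
      rcases Nat.lt_or_ge t (T+1) with h1 | h1
      · exact Or.inl ⟨t, h1, s, hs, rfl⟩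
      · have : t = T + 1 := by omega
        subst this
        refine Or.inr ⟨(s + T) % l, ⟨T, by omega, s, hs, rfl⟩, ?_⟩
        rw [Nat.mod_add_mod, Nat.add_assoc]
    · rintro (⟨t, ht, s, hs, rfl⟩ | ⟨y, ⟨t, ht, s, hs, rfl⟩, rfl⟩)
      · exact ⟨t, by omega, s, hs, rfl⟩
      · refine ⟨t+1, by omega, s, hs, ?_⟩
        rw [Nat.mod_add_mod, Nat.add_assoc]
  have hcard : ∀ T, min l (S.card + T) ≤ (W T).card := by
    intro T
    induction T with
    | zero => simp [hW0]
    | succ T ih =>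
      by_cases hsub : (W T).image (fun x => (x+1) % l) ⊆ W T
      · have hcl : ∀ x ∈ W T, (x+1) % l ∈ W T := fun x hx =>
          hsub (Finset.mem_image_of_mem _ hx)
        have := mod_closure h0 (W T) (hWsub T) (hWne T) hcl
        have hsup : W T ⊆ W (T+1) := by rw [hWstep T]; exact Finset.subset_union_left
        have : l ≤ (W (T+1)).card := by
          calc l = (W T).card := by rw [this, Finset.card_range]
          _ ≤ (W (T+1)).card := Finset.card_le_card hsup
        omega
      · rw [Finset.not_subset] at hsub
        obtain ⟨y, hy1, hy2⟩ := hsub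
        have : insert y (W T) ⊆ W (T+1) := by
          rw [hWstep T]
          intro z hz
          rcases Finset.mem_insert.mp hz with rfl | hz
          · exact Finset.mem_union_right _ hy1
          · exact Finset.mem_union_left _ hz
        have hc := Finset.card_le_card this
        rw [Finset.card_insert_of_notMem hy2] at hc
        omega
  have hUeq : (Finset.range T).biUnion (fun t => S.image (fun s => (s + t + 1) % l))
      = (W (T-1)).image (fun x => (x+1) % l) := by
    ext x
    simp only [hW, Finset.mem_biUnion, Finset.mem_image, Finset.mem_range]
    constructor
    · rintro ⟨t, ht, s, hs, rfl⟩
      exact ⟨(s + t) % l, ⟨t, by omega, s, hs, rfl⟩, by rw [Nat.mod_add_mod]⟩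
    · rintro ⟨y, ⟨t, ht, s, hs, rfl⟩, rfl⟩
      exact ⟨t, by omega, s, hs, by rw [Nat.mod_add_mod]⟩
  rw [hUeq]
  have hinj : Set.InjOn (fun x => (x+1) % l) (W (T-1)) := by
    intro x hx y hy hxy
    have hx' : x < l := Finset.mem_range.mp (hWsub _ hx)
    have hy' : y < l := Finset.mem_range.mp (hWsub _ hy)
    simp only at hxy
    rw [mod_two_cases h0 (by omega), mod_two_cases h0 (by omega)] at hxy
    split_ifs at hxy <;> omega
  rw [Finset.card_image_of_injOn hinj]
  have := hcard (T-1)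
  omega


lemma gidx {L : List V} {a b : ℕ} (hab : a = b) (ha : a < L.length) :
    L[a]'ha = L[b]'(hab ▸ ha) := by subst hab; rfl

lemma mod_inj_small {l a b : ℕ} (h0 : 0 < l) (h : a % l = b % l) (hd : a ≤ b)
    (hlt : b - a < l) : a = b := by
  have hdvd : l ∣ b - a := (Nat.modEq_iff_dvd' hd).mp h
  have := Nat.eq_zero_of_dvd_of_lt hdvd
  rcases Nat.eq_zero_or_pos (b - a) with hz | hp
  · omega
  · exact absurd hlt (by intro hc; exact absurd (this hc) (by omega))

section Ear

variable {A : V → V → Prop} [DecidableRel A] {LC : List V}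

/-- the cyclic read of a list -/
def cg (LC : List V) (h0 : 0 < LC.length) : ℕ → V :=
  fun p => LC[p % LC.length]'(Nat.mod_lt _ h0)

lemma cg_arc (hcyc : CycL A LC) (h0 : 0 < LC.length) (p : ℕ) :
    A (cg LC h0 p) (cg LC h0 (p+1)) := by
  have h := cyc_getElem hcyc (Nat.mod_lt p h0)
  show A (LC[p % LC.length]'(Nat.mod_lt _ h0)) (LC[(p+1) % LC.length]'(Nat.mod_lt _ h0))
  rw [gidx (Nat.mod_add_mod p LC.length 1).symm]
  exact h

lemma cg_small {LC : List V} (h0 : 0 < LC.length) {p : ℕ} (hp : p < LC.length) :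
    cg LC h0 p = LC[p] := gidx (Nat.mod_eq_of_lt hp) _

lemma cg_mod (h0 : 0 < LC.length) (p : ℕ) : cg LC h0 (p % LC.length) = cg LC h0 p :=
  gidx (Nat.mod_mod_of_dvd p dvd_rfl) _

lemma cg_period (h0 : 0 < LC.length) (p : ℕ) : cg LC h0 (p + LC.length) = cg LC h0 p :=
  gidx (Nat.add_mod_right p LC.length) _

lemma cg_mem (h0 : 0 < LC.length) (p : ℕ) : cg LC h0 p ∈ LC := List.getElem_mem _

lemma cg_inj (hnd : LC.Nodup) (h0 : 0 < LC.length) {p p' : ℕ}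
    (h : cg LC h0 p = cg LC h0 p') : p % LC.length = p' % LC.length :=
  hnd.getElem_inj_iff.mp h

lemma earA (hnd : LC.Nodup) (hcyc : CycL A LC)
    (hmax : ∀ m, HasCycL A m → m ≤ LC.length) (h0 : 0 < LC.length)
    {LW : List V} (hW0 : LW ≠ []) (hWnd : LW.Nodup) (hWch : LW.Chain' A)
    (hWR : ∀ x ∈ LW, x ∉ LC)
    {i t : ℕ} (ht1 : 1 ≤ t) (htm : t ≤ LW.length) (htl : t ≤ LC.length)
    (hin : A (cg LC h0 i) (LW.head hW0))
    (hout : A (LW.getLast hW0) (cg LC h0 (i + t))) :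
    False := by
  set l := LC.length with hl
  set F : Fin (l - t + 1) → V := fun k => cg LC h0 (i + t + k.val) with hF
  set NL : List V := (List.ofFn F) ++ LW with hNL
  have hofne : List.ofFn F ≠ [] := by
    intro he
    have : (List.ofFn F).length = l - t + 1 := List.length_ofFn (f := F)
    rw [he] at this; simp at this
  have hlenNL : NL.length = (l - t + 1) + LW.length := by simp [hNL]; omega
  have hFmem : ∀ x ∈ List.ofFn F, x ∈ LC := by
    intro x hx
    obtain ⟨k, rfl⟩ := Set.mem_range.mp ((List.mem_ofFn' _ _).mp hx)
    exact cg_mem h0 _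
  have hnodup : NL.Nodup := by
    rw [hNL, List.nodup_append']
    refine ⟨?_, hWnd, ?_⟩
    · rw [List.nodup_ofFn]
      intro k₁ k₂ hk
      have h1 := cg_inj hnd h0 hk
      rcases Nat.le_total k₁.val k₂.val with hle | hle
      · have := mod_inj_small h0 h1 (by omega) (by
          have := k₂.isLt; omega)
        exact Fin.ext (by omega)
      · have := mod_inj_small h0 h1.symm (by omega) (by
          have := k₁.isLt; omega)
        exact Fin.ext (by omega)
    · intro x hx hx2
      exact hWR x hx2 (hFmem x hx)
  have hchain : NL.Chain' A := by
    rw [hNL]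
    refine List.isChain_append.mpr ⟨?_, hWch, ?_⟩
    · rw [List.isChain_ofFn]
      intro k hk
      have := cg_arc hcyc h0 (i + t + k)
      simpa [hF, Nat.add_assoc] using this
    · intro x hx y hy
      rw [List.getLast?_eq_getLast hofne, Option.mem_def, Option.some_inj] at hx
      rw [List.head?_eq_head hW0, Option.mem_def, Option.some_inj] at hy
      subst hx; subst hy
      have hlast : (List.ofFn F).getLast hofne = F ⟨l - t, by omega⟩ := by
        rw [List.getLast_eq_getElem]
        rw [gidx (show (List.ofFn F).length - 1 = l - t by simp)]
        rw [List.getElem_ofFn]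
      rw [hlast]
      have : F ⟨l - t, by omega⟩ = cg LC h0 i := by
        show cg LC h0 (i + t + (l - t)) = cg LC h0 i
        rw [show i + t + (l - t) = i + l by omega]
        exact cg_period h0 i
      rw [this]
      exact hin
  have hcyc' : CycL A NL := by
    refine ⟨hchain, ?_⟩
    intro hne
    have hlast : NL.getLast hne = LW.getLast hW0 := List.getLast_append_of_ne_nil _ hW0
    have hhead : NL.head hne = cg LC h0 (i + t) := by
      have h1 : NL.head hne = (List.ofFn F).head hofne := List.head_append_left hofne
      rw [h1, List.head_eq_getElem_zero hofne, List.getElem_ofFn]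
      show cg LC h0 (i + t + (0:ℕ)) = _
      rw [Nat.add_zero]
    rw [hlast, hhead]
    exact hout
  have : NL.length ≤ l := hmax NL.length ⟨NL, rfl, hnodup, hcyc'⟩
  omega

variable (A LC) in
/-- positions on the cycle with an arc into `w` -/
def SinP [DecidableRel A] (h0 : 0 < LC.length) (w : V) : Finset ℕ :=
  (Finset.range LC.length).filter (fun p => A (cg LC h0 p) w)

variable (A LC) in
/-- positions on the cycle receiving an arc from `w` -/
def SoutP [DecidableRel A] (h0 : 0 < LC.length) (w : V) : Finset ℕ :=
  (Finset.range LC.length).filter (fun p => A w (cg LC h0 p))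

lemma SinP_subset (h0 : 0 < LC.length) (w : V) : SinP A LC h0 w ⊆ Finset.range LC.length :=
  Finset.filter_subset _ _

lemma SoutP_subset (h0 : 0 < LC.length) (w : V) : SoutP A LC h0 w ⊆ Finset.range LC.length :=
  Finset.filter_subset _ _

lemma earB (hnd : LC.Nodup) (hcyc : CycL A LC)
    (hmax : ∀ m, HasCycL A m → m ≤ LC.length) (h0 : 0 < LC.length)
    {LW : List V} (hW0 : LW ≠ []) (hWnd : LW.Nodup) (hWch : LW.Chain' A)
    (hWR : ∀ x ∈ LW, x ∉ LC)
    (hne : (SinP A LC h0 (LW.head hW0)).Nonempty) :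
    (SoutP A LC h0 (LW.getLast hW0)).card
      + min LC.length ((SinP A LC h0 (LW.head hW0)).card + min LW.length LC.length - 1)
      ≤ LC.length := by
  set l := LC.length with hl
  set T := min LW.length l with hT
  have hT1 : 1 ≤ T := by
    have : 1 ≤ LW.length := List.length_pos_iff.mpr hW0
    omega
  set S := SinP A LC h0 (LW.head hW0) with hS
  set U : Finset ℕ := (Finset.range T).biUnion (fun t => S.image (fun s => (s + t + 1) % l)) with hU
  have hUsub : U ⊆ Finset.range l := by
    intro x hx
    simp only [hU, Finset.mem_biUnion, Finset.mem_image] at hx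
    obtain ⟨t, _, s, _, rfl⟩ := hx
    exact Finset.mem_range.mpr (Nat.mod_lt _ h0)
  have hdisj : Disjoint U (SoutP A LC h0 (LW.getLast hW0)) := by
    rw [Finset.disjoint_left]
    intro x hx hx2
    simp only [hU, Finset.mem_biUnion, Finset.mem_image, Finset.mem_range] at hx
    obtain ⟨t, ht, s, hs, rfl⟩ := hx
    have hsin : A (cg LC h0 s) (LW.head hW0) := (Finset.mem_filter.mp hs).2
    have hsout : A (LW.getLast hW0) (cg LC h0 ((s + t + 1) % l)) := (Finset.mem_filter.mp hx2).2
    rw [cg_mod h0] at hsout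
    exact earA hnd hcyc hmax h0 hW0 hWnd hWch hWR (i := s) (t := t + 1)
      (by omega) (by omega) (by omega) hsin (by rwa [← Nat.add_assoc])
  have hcardU : min l (S.card + T - 1) ≤ U.card := by
    apply shiftGrow h0 S (SinP_subset h0 _) hne hT1
  have hsum : U.card + (SoutP A LC h0 (LW.getLast hW0)).card ≤ l := by
    have := Finset.card_le_card (Finset.union_subset hUsub (SoutP_subset (A:=A) h0 (LW.getLast hW0)))
    rw [Finset.card_union_of_disjoint hdisj] at this
    simpa using this
  omega

lemma card_SoutP (hnd : LC.Nodup) (h0 : 0 < LC.length) (w : V) :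
    (SoutP A LC h0 w).card = (LC.toFinset.filter (fun x => A w x)).card := by
  apply Finset.card_bij (fun p _ => cg LC h0 p)
  · intro p hp
    rw [Finset.mem_filter]
    exact ⟨List.mem_toFinset.mpr (cg_mem h0 p), (Finset.mem_filter.mp hp).2⟩
  · intro p hp p' hp' he
    have := cg_inj hnd h0 he
    have hp1 := Finset.mem_range.mp ((SoutP_subset h0 w) hp)
    have hp2 := Finset.mem_range.mp ((SoutP_subset h0 w) hp')
    rwa [Nat.mod_eq_of_lt hp1, Nat.mod_eq_of_lt hp2] at this
  · intro x hx
    rw [Finset.mem_filter, List.mem_toFinset] at hx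
    obtain ⟨p, hp, rfl⟩ := List.mem_iff_getElem.mp hx.1
    refine ⟨p, ?_, (cg_small h0 hp).symm ▸ rfl⟩
    rw [SoutP, Finset.mem_filter, Finset.mem_range]
    exact ⟨hp, by rw [cg_small h0 hp]; exact hx.2⟩

lemma card_SinP (hnd : LC.Nodup) (h0 : 0 < LC.length) (w : V) :
    (SinP A LC h0 w).card = (LC.toFinset.filter (fun x => A x w)).card := by
  apply Finset.card_bij (fun p _ => cg LC h0 p)
  · intro p hp
    rw [Finset.mem_filter]
    exact ⟨List.mem_toFinset.mpr (cg_mem h0 p), (Finset.mem_filter.mp hp).2⟩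
  · intro p hp p' hp' he
    have := cg_inj hnd h0 he
    have hp1 := Finset.mem_range.mp ((SinP_subset h0 w) hp)
    have hp2 := Finset.mem_range.mp ((SinP_subset h0 w) hp')
    rwa [Nat.mod_eq_of_lt hp1, Nat.mod_eq_of_lt hp2] at this
  · intro x hx
    rw [Finset.mem_filter, List.mem_toFinset] at hx
    obtain ⟨p, hp, rfl⟩ := List.mem_iff_getElem.mp hx.1
    refine ⟨p, ?_, (cg_small h0 hp).symm ▸ rfl⟩
    rw [SinP, Finset.mem_filter, Finset.mem_range]
    exact ⟨hp, by rw [cg_small h0 hp]; exact hx.2⟩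

end Ear

lemma card_filter_split (p : V → Prop) [DecidablePred p] (s t : Finset V) (hts : t ⊆ s) :
    (s.filter p).card = (t.filter p).card + ((s \ t).filter p).card := by
  have h1 : s.filter p = (t.filter p) ∪ ((s \ t).filter p) := by
    rw [← Finset.filter_union, Finset.union_sdiff_of_subset hts]
  rw [h1, Finset.card_union_of_disjoint (Finset.disjoint_filter_filter Finset.disjoint_sdiff)]

variable [Fintype V]

lemma exists_cycle {A : V → V → Prop} (hloop : ∀ v, ¬ A v v) (f : V → V)
    (hf : ∀ v, A v (f v)) (v₀ : V) : ∃ m, 2 ≤ m ∧ HasCycL A m := by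
  classical
  set g : ℕ → V := fun k => f^[k] v₀ with hg
  have hgs : ∀ k, g (k+1) = f (g k) := by
    intro k; simp [hg, Function.iterate_succ_apply']
  have hex : ∃ j, ∃ i, i < j ∧ g i = g j := by
    have hni : ¬ Function.Injective (fun k : Fin (Fintype.card V + 1) => g k.val) := by
      intro hinj
      have := Fintype.card_le_of_injective _ hinj
      simp at this
    rw [Function.not_injective_iff] at hni
    obtain ⟨a, b, hab, hne⟩ := hni
    rcases Nat.lt_or_ge a.val b.val with h | h
    · exact ⟨b.val, a.val, h, hab⟩
    · have : b.val < a.val := by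
        rcases Nat.lt_or_ge b.val a.val with h' | h'
        · exact h'
        · exact absurd (Fin.ext (by omega)) hne
      exact ⟨a.val, b.val, this, hab.symm⟩
  set j := Nat.find hex with hj
  obtain ⟨i, hij, hgij⟩ := Nat.find_spec hex
  set L : List V := (List.range (j - i)).map (fun k => g (i + k)) with hL
  have hlen : L.length = j - i := by simp [hL]
  have hget : ∀ p (hp : p < L.length), L[p] = g (i + p) := by
    intro p hp
    simp [hL]
  have hnd : L.Nodup := by
    rw [hL]
    apply List.Nodup.map_on ?_ (List.nodup_range)
    intro a ha b hb he
    rw [List.mem_range] at ha hb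
    by_contra hne
    rcases Nat.lt_or_ge a b with h | h
    · have : ∃ i', i' < i + b ∧ g i' = g (i + b) := ⟨i + a, by omega, he⟩
      have := Nat.find_min hex (show i + b < j by omega) ⟨i + a, by omega, he⟩
      exact this
    · have hba : b < a := by omega
      have := Nat.find_min hex (show i + a < j by omega) ⟨i + b, by omega, he.symm⟩
      exact this
  have hchain : L.Chain' A := by
    apply List.isChain_iff_getElem.mpr
    intro p hp
    rw [hget p (by omega), hget (p+1) (by omega),
      ← Nat.add_assoc, hgs (i + p)]
    exact hf _
  have hm2 : 2 ≤ j - i := by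
    rcases Nat.lt_or_ge (j - i) 2 with h | h
    · have h1 : j = i + 1 := by omega
      have h2 : g j = f (g i) := by rw [h1, hgs]
      have h3 : g i = f (g i) := by conv_lhs => rw [hgij, ← hj, h2]
      have h5 := hf (g i)
      rw [← h3] at h5
      exact absurd h5 (hloop _)
    · exact h
  refine ⟨j - i, hm2, L, hlen, hnd, hchain, ?_⟩
  intro hne
  have hlast : L.getLast hne = g (j - 1) := by
    rw [List.getLast_eq_getElem, hget _ (by omega)]
    congr 1
    omega
  have hhead : L.head hne = g i := by
    rw [List.head_eq_getElem_zero, hget 0 (by omega), Nat.add_zero]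
  rw [hlast, hhead]
  have h4 := hgs (j-1)
  rw [show j - 1 + 1 = j by omega] at h4
  rw [hgij, ← hj, h4]
  exact hf _

lemma card_filter_subtype (s : Finset V) (p : V → Prop) [DecidablePred p] :
    ((Finset.univ : Finset ↥s).filter (fun x => p x.val)).card = (s.filter p).card := by
  rw [Finset.univ_eq_attach, Finset.filter_attach, Finset.card_map, Finset.card_attach]




lemma head_congr {L L' : List V} (h : L = L') (h1 : L ≠ []) (h2 : L' ≠ []) :
    L.head h1 = L'.head h2 := by subst h; rfl

lemma getLast_congr {L L' : List V} (h : L = L') (h1 : L ≠ []) (h2 : L' ≠ []) :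
    L.getLast h1 = L'.getLast h2 := by subst h; rfl

lemma head_dropLast {L : List V} (h : L.dropLast ≠ []) (hne : L ≠ []) :
    L.dropLast.head h = L.head hne := by
  rw [List.head_eq_getElem_zero h, List.head_eq_getElem_zero hne]
  rw [List.getElem_dropLast]

lemma chain'_last_step {r : V → V → Prop} {L : List V} (h : L.Chain' r) (hne : L ≠ [])
    (hd : L.dropLast ≠ []) : r (L.dropLast.getLast hd) (L.getLast hne) := by
  have hlen : L.dropLast.length = L.length - 1 := List.length_dropLast
  have h1 : 0 < L.dropLast.length := List.length_pos_iff.mpr hd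
  have h2 : 2 ≤ L.length := by omega
  rw [List.getLast_eq_getElem, List.getLast_eq_getElem]
  have hget : L.dropLast[L.dropLast.length - 1]'(by omega) = L[L.length - 2]'(by omega) := by
    rw [List.getElem_dropLast]
    congr 1
    omega
  rw [hget]
  have := List.isChain_iff_getElem.mp h (L.length - 2) (by omega)
  convert this using 2
  omega

lemma chain_all_mem {r : V → V → Prop} {P : V → Prop} {L : List V}
    (h : L.Chain' r) (hstep : ∀ a b, r a b → P b) (hne : L ≠ []) (hhd : P (L.head hne)) :
    ∀ x ∈ L, P x := by
  intro x hx
  obtain ⟨k, hk, rfl⟩ := List.mem_iff_getElem.mp hx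
  rcases Nat.eq_zero_or_pos k with rfl | hk0
  · rwa [List.head_eq_getElem_zero hne] at hhd
  · have := List.isChain_iff_getElem.mp h (k-1) (by omega)
    have h2 : k - 1 + 1 = k := by omega
    rw [gidx h2] at this
    exact hstep _ _ this

lemma prefix_until {P : V → Prop} [DecidablePred P] :
    ∀ (L : List V) (hne : L ≠ []), P (L.getLast hne) →
    ∃ L1, L1 <+: L ∧ ∃ hne1 : L1 ≠ [], L1.head hne1 = L.head hne ∧ P (L1.getLast hne1) ∧
      ∀ x ∈ L1.dropLast, ¬ P x := by
  intro L
  induction L with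
  | nil => simp
  | cons a L' ih =>
    intro hne hP
    by_cases ha : P a
    · exact ⟨[a], ⟨L', rfl⟩, by simp, by simp, by simpa using ha, by simp⟩
    · rcases L' with _ | ⟨b, L''⟩
      · simp only [List.getLast_singleton] at hP
        exact absurd hP ha
      · have hne' : (b :: L'') ≠ [] := by simp
        have hPlast : P ((b :: L'').getLast hne') := by
          rwa [List.getLast_cons hne'] at hP
        obtain ⟨L1, hpre, hne1, hhd, hlast, hdrop⟩ := ih hne' hPlast
        refine ⟨a :: L1, ?_, by simp, by simp, ?_, ?_⟩
        · rw [List.cons_prefix_cons]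
          exact ⟨rfl, hpre⟩
        · rw [List.getLast_cons hne1]
          exact hlast
        · intro x hx
          rw [List.dropLast_cons_of_ne_nil hne1] at hx
          rcases List.mem_cons.mp hx with rfl | hx2
          · exact ha
          · exact hdrop x hx2

universe u

theorem aux (N : ℕ) : ∀ {V : Type u} [Fintype V] [DecidableEq V] (A : V → V → Prop)
    [DecidableRel A], Fintype.card V ≤ N → (∀ v, ¬ A v v) →
    (∀ u v, Relation.ReflTransGen A u v) →
    (∀ v, Fintype.card V ≤ (Finset.univ.filter (fun u => A v u)).card
        + (Finset.univ.filter (fun u => A u v)).card) →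
    ∃ L : List V, L.Nodup ∧ (∀ v, v ∈ L) ∧ CycL A L := by
  induction N with
  | zero =>
    intro V _ _ A _ hcard hloop hstrong hdeg
    have : IsEmpty V := Fintype.card_eq_zero_iff.mp (by omega)
    exact ⟨[], by simp, fun v => (this.false v).elim, List.isChain_nil, fun h => absurd rfl h⟩
  | succ N IH =>
    intro V _ _ A _ hcard hloop hstrong hdeg
    classical
    by_cases hV : Fintype.card V = 0
    · have : IsEmpty V := Fintype.card_eq_zero_iff.mp hV
      exact ⟨[], by simp, fun v => (this.false v).elim, List.isChain_nil, fun h => absurd rfl h⟩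
    set n := Fintype.card V with hn
    have hn1 : 1 ≤ n := by omega
    haveI : Nonempty V := Fintype.card_pos_iff.mp (by omega)
    -- every vertex has an out-neighbor
    have hout1 : ∀ v : V, ∃ w, A v w := by
      intro v
      by_contra hno
      push_neg at hno
      have h1 : (Finset.univ.filter (fun u => A v u)) = ∅ :=
        Finset.filter_eq_empty_iff.mpr (fun u _ => hno u)
      have h2 : (Finset.univ.filter (fun u => A u v)) ⊆ Finset.univ.erase v := by
        intro u hu
        rw [Finset.mem_erase]
        exact ⟨fun he => hloop v (he ▸ (Finset.mem_filter.mp hu).2), Finset.mem_univ u⟩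
      have h3 := Finset.card_le_card h2
      rw [Finset.card_erase_of_mem (Finset.mem_univ v), Finset.card_univ] at h3
      have h4 := hdeg v
      rw [h1] at h4
      simp at h4
      omega
    set f : V → V := fun v => Classical.choose (hout1 v) with hfdef
    have hf : ∀ v, A v (f v) := fun v => Classical.choose_spec (hout1 v)
    obtain ⟨m₀, hm₀2, hm₀⟩ := exists_cycle hloop f hf (Classical.arbitrary V)
    have hbound : ∀ m, HasCycL A m → m ≤ n := by
      rintro m ⟨L, hlen, hnd, _⟩
      rw [← hlen]
      exact hnd.length_le_card
    set l := Nat.findGreatest (HasCycL A) n with hldef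
    have hl2 : 2 ≤ l := le_trans hm₀2 (Nat.le_findGreatest (hbound _ hm₀) hm₀)
    have hlP : HasCycL A l := Nat.findGreatest_of_ne_zero hldef.symm (by omega)
    obtain ⟨LC, hLClen, hLCnd, hLCcyc⟩ := hlP
    have hmax : ∀ m, HasCycL A m → m ≤ l := by
      intro m hm
      by_contra hgt
      push_neg at hgt
      exact Nat.findGreatest_is_greatest hgt (hbound m hm) hm
    have h0 : 0 < LC.length := by omega
    have hmaxLC : ∀ m, HasCycL A m → m ≤ LC.length := by rw [hLClen]; exact hmax
    by_cases hln : l = n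
    · refine ⟨LC, hLCnd, ?_, hLCcyc⟩
      have he : LC.toFinset = Finset.univ := by
        apply Finset.eq_univ_of_card
        rw [List.toFinset_card_of_nodup hLCnd]
        omega
      intro v
      rw [← List.mem_toFinset, he]
      exact Finset.mem_univ v
    exfalso
    have hlltn : l < n := lt_of_le_of_ne (Nat.findGreatest_le n) hln
    set Cs := LC.toFinset with hCs
    have hCscard : Cs.card = l := by rw [hCs, List.toFinset_card_of_nodup hLCnd]; exact hLClen
    set R := (Finset.univ : Finset V) \ Cs with hR
    have hRcard : R.card = n - l := by
      rw [hR, Finset.card_sdiff_of_subset (Finset.subset_univ Cs), Finset.card_univ, hCscard]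
    have hRne : R.Nonempty := Finset.card_pos.mp (by omega)
    have hmemR : ∀ w, w ∈ R ↔ w ∉ LC := by
      intro w
      rw [hR, Finset.mem_sdiff, hCs, List.mem_toFinset]
      simp
    set RR : V → V → Prop := fun a b => A a b ∧ a ∈ R ∧ b ∈ R with hRR
    obtain ⟨u₀, hu₀R, hu₀min⟩ := R.exists_min_image
      (fun v => (Finset.univ.filter (fun x => Relation.ReflTransGen RR v x)).card) hRne
    set Q := R.filter (fun v => Relation.ReflTransGen RR u₀ v ∧ Relation.ReflTransGen RR v u₀)
      with hQ
    have hu₀Q : u₀ ∈ Q := by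
      rw [hQ, Finset.mem_filter]
      exact ⟨hu₀R, Relation.ReflTransGen.refl, Relation.ReflTransGen.refl⟩
    have hQR : Q ⊆ R := Finset.filter_subset _ _
    set q := Q.card with hq
    have hq1 : 1 ≤ q := Finset.card_pos.mpr ⟨u₀, hu₀Q⟩
    -- sink property
    have hsink : ∀ u ∈ Q, ∀ w ∈ R, w ∉ Q → ¬ A u w := by
      intro u hu w hw hwQ hA
      have huQ := Finset.mem_filter.mp hu
      have h1 : Relation.ReflTransGen RR u₀ w :=
        huQ.2.1.tail ⟨hA, hQR hu, hw⟩
      have h2 : ¬ Relation.ReflTransGen RR w u₀ := by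
        intro hc
        exact hwQ (Finset.mem_filter.mpr ⟨hw, h1, hc⟩)
      have hsub : (Finset.univ.filter (fun x => Relation.ReflTransGen RR w x))
          ⊆ (Finset.univ.filter (fun x => Relation.ReflTransGen RR u₀ x)) := by
        intro x hx
        rw [Finset.mem_filter] at hx ⊢
        exact ⟨hx.1, h1.trans hx.2⟩
      have hne2 : u₀ ∉ (Finset.univ.filter (fun x => Relation.ReflTransGen RR w x)) := by
        rw [Finset.mem_filter]
        exact fun hc => h2 hc.2
      have hmem2 : u₀ ∈ (Finset.univ.filter (fun x => Relation.ReflTransGen RR u₀ x)) := by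
        rw [Finset.mem_filter]
        exact ⟨Finset.mem_univ _, Relation.ReflTransGen.refl⟩
      have hss := Finset.card_lt_card (Finset.ssubset_iff_of_subset hsub |>.mpr ⟨u₀, hmem2, hne2⟩)
      have := hu₀min w hw
      omega
    -- strong connectivity within Q
    have hRTGinQ : ∀ x y, Relation.ReflTransGen RR x y → ∀ (hx : x ∈ Q) (hy : y ∈ Q),
        Relation.ReflTransGen (fun a b : ↥Q => A a.val b.val) ⟨x, hx⟩ ⟨y, hy⟩ := by
      intro x y hxy
      induction hxy using Relation.ReflTransGen.head_induction_on with
      | refl => intro hx hy; exact Relation.ReflTransGen.refl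
      | @head a c hac hcb ih =>
        intro ha hy
        have hcQ : c ∈ Q := by
          rw [hQ, Finset.mem_filter]
          refine ⟨hac.2.2, (Finset.mem_filter.mp ha).2.1.tail hac, ?_⟩
          exact hcb.trans (Finset.mem_filter.mp hy).2.2
        exact Relation.ReflTransGen.head (show A (⟨a, ha⟩ : ↥Q).val (⟨c, hcQ⟩ : ↥Q).val from hac.1)
          (ih hcQ hy)
    have hstrongQ : ∀ (a b : ↥Q), Relation.ReflTransGen (fun a b : ↥Q => A a.val b.val) a b := by
      rintro ⟨x, hx⟩ ⟨y, hy⟩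
      have h1 : Relation.ReflTransGen RR x y :=
        ((Finset.mem_filter.mp hx).2.2).trans ((Finset.mem_filter.mp hy).2.1)
      exact hRTGinQ x y h1 hx hy
    -- degree decomposition
    have hdecomp : ∀ w ∈ R, n ≤ (SinP A LC h0 w).card + (SoutP A LC h0 w).card
        + (R.filter (fun x => A w x)).card + (R.filter (fun x => A x w)).card := by
      intro w hw
      have h1 := hdeg w
      have h2 : (Finset.univ.filter (fun u => A w u)).card
          = (Cs.filter (fun x => A w x)).card + (R.filter (fun x => A w x)).card :=
        card_filter_split _ Finset.univ Cs (Finset.subset_univ Cs)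
      have h3 : (Finset.univ.filter (fun u => A u w)).card
          = (Cs.filter (fun x => A x w)).card + (R.filter (fun x => A x w)).card :=
        card_filter_split _ Finset.univ Cs (Finset.subset_univ Cs)
      rw [h2, h3, ← card_SoutP hLCnd h0 w, ← card_SinP hLCnd h0 w] at h1
      omega
    -- single vertex ear bound
    have hm1 : ∀ w ∈ R, (SinP A LC h0 w).card + (SoutP A LC h0 w).card ≤ l := by
      intro w hw
      have hScard : (SinP A LC h0 w).card ≤ l := by
        have := Finset.card_le_card (SinP_subset (A := A) h0 w)
        rwa [Finset.card_range, hLClen] at this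
      have hSocard : (SoutP A LC h0 w).card ≤ l := by
        have := Finset.card_le_card (SoutP_subset (A := A) h0 w)
        rwa [Finset.card_range, hLClen] at this
      by_cases hne : (SinP A LC h0 w).Nonempty
      · have hb := earB hLCnd hLCcyc hmaxLC h0 (LW := [w]) (by simp) (by simp) (List.isChain_singleton _)
          (by intro x hx; simp only [List.mem_singleton] at hx; subst hx; exact (hmemR _).mp hw) (by simpa using hne)
        simp only [List.head_cons, List.getLast_singleton, List.length_singleton] at hb
        rw [hLClen] at hb
        have hmin1 : min 1 l = 1 := by omega
        rw [hmin1] at hb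
        have : min l ((SinP A LC h0 w).card + 1 - 1) = (SinP A LC h0 w).card := by omega
        rw [this] at hb
        omega
      · rw [Finset.not_nonempty_iff_eq_empty] at hne
        rw [hne]
        simpa using hSocard
    -- internal degree in Q
    have hdegQ : ∀ u ∈ Q, q ≤ (Q.filter (fun x => A u x)).card
        + (Q.filter (fun x => A x u)).card := by
      intro u hu
      have h1 := hdecomp u (hQR hu)
      have h2 := hm1 u (hQR hu)
      have h3 : (R.filter (fun x => A u x)).card
          = (Q.filter (fun x => A u x)).card + ((R \ Q).filter (fun x => A u x)).card :=
        card_filter_split _ R Q hQR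
      have h4 : ((R \ Q).filter (fun x => A u x)).card = 0 := by
        rw [Finset.card_eq_zero, Finset.filter_eq_empty_iff]
        intro x hx
        rw [Finset.mem_sdiff] at hx
        exact hsink u hu x hx.1 hx.2
      have h5 : (R.filter (fun x => A x u)).card
          = (Q.filter (fun x => A x u)).card + ((R \ Q).filter (fun x => A x u)).card :=
        card_filter_split _ R Q hQR
      have h6 : ((R \ Q).filter (fun x => A x u)).card ≤ (R \ Q).card :=
        Finset.card_le_card (Finset.filter_subset _ _)
      have h7 : (R \ Q).card = R.card - q := by rw [Finset.card_sdiff_of_subset hQR, hq]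
      have h8 := Finset.card_le_card hQR
      omega
    -- apply induction hypothesis to Q
    have hcardQ : Fintype.card ↥Q = q := Fintype.card_coe Q
    have hdegQ' : ∀ (u : ↥Q), Fintype.card ↥Q ≤
        ((Finset.univ : Finset ↥Q).filter (fun x => A u.val x.val)).card
        + ((Finset.univ : Finset ↥Q).filter (fun x => A x.val u.val)).card := by
      intro u
      have e1 := card_filter_subtype Q (fun x => A u.val x)
      have e2 := card_filter_subtype Q (fun x => A x u.val)
      have e3 := hdegQ u.val u.2
      have e4 := hcardQ
      omega
    have hqltn : q < n := by
      have := Finset.card_le_card hQR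
      omega
    obtain ⟨LQs, hLQsnd, hLQsall, hLQscyc⟩ := IH (V := ↥Q) (fun a b : ↥Q => A a.val b.val)
      (by omega) (fun v => hloop v.val) hstrongQ hdegQ'
    set LQ := LQs.map Subtype.val with hLQ
    have hLQnd : LQ.Nodup := hLQsnd.map Subtype.coe_injective
    have hLQmem : ∀ x ∈ LQ, x ∈ Q := by
      intro x hx
      obtain ⟨y, _, rfl⟩ := List.mem_map.mp hx
      exact y.2
    have hLQall : ∀ x ∈ Q, x ∈ LQ := by
      intro x hx
      exact List.mem_map.mpr ⟨⟨x, hx⟩, hLQsall _, rfl⟩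
    have hLQchain : LQ.Chain' A := (List.isChain_map _).mpr hLQscyc.1
    have hLQne : LQ ≠ [] := by
      intro he
      have := hLQall u₀ hu₀Q
      rw [he] at this
      simp at this
    have hLQsne : LQs ≠ [] := by
      intro he
      rw [hLQ, he] at hLQne
      simp at hLQne
    have hLQcyc : CycL A LQ := by
      refine ⟨hLQchain, ?_⟩
      intro hne
      show A ((LQs.map Subtype.val).getLast hne) ((LQs.map Subtype.val).head hne)
      rw [List.getLast_map hne, List.head_map hne]
      exact hLQscyc.2 _
    have hlenLQ : LQ.length = q := by
      rw [hLQ, List.length_map]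
      have : LQs.toFinset = Finset.univ := Finset.eq_univ_iff_forall.mpr (fun x => List.mem_toFinset.mpr (hLQsall x))
      have hh := List.toFinset_card_of_nodup hLQsnd
      rw [this, Finset.card_univ, hcardQ] at hh
      omega
    have hq2 : 2 ≤ q := by
      rcases Nat.lt_or_ge q 2 with hlt | hge
      · exfalso
        have hgen : ∀ (L : List V), L.length = 1 → CycL A L → False := by
          intro L hlen hc
          obtain ⟨a, rfl⟩ := List.length_eq_one_iff.mp hlen
          have h2 := hc.2 (by simp)
          simp at h2
          exact hloop a h2
        exact hgen LQ (by omega) hLQcyc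
      · exact hge
    have hqlel : q ≤ l := hmax q ⟨LQ, hlenLQ, hLQnd, hLQcyc⟩
    have h0q : 0 < LQ.length := by omega
    -- abbreviations
    set cgQ : ℕ → V := cg LQ h0q with hcgQ
    have hcgQarc : ∀ p, A (cgQ p) (cgQ (p+1)) := cg_arc hLQcyc h0q
    have hcgQmem : ∀ p, cgQ p ∈ Q := fun p => hLQmem _ (cg_mem h0q p)
    have hcgQperiod : ∀ p, cgQ (p + q) = cgQ p := by
      intro p
      rw [hcgQ, show q = LQ.length by omega]
      exact cg_period h0q p
    set af : ℕ → ℕ := fun p => (SinP A LC h0 (cgQ p)).card with haf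
    set bf : ℕ → ℕ := fun p => (SoutP A LC h0 (cgQ p)).card with hbf
    have hafle : ∀ p, af p ≤ l := by
      intro p
      have := Finset.card_le_card (SinP_subset (A := A) h0 (cgQ p))
      rwa [Finset.card_range, hLClen] at this

    have haf_per : ∀ p, af (p + q) = af p := by
      intro p
      simp only [haf]
      rw [hcgQperiod]
    have hbf_per : ∀ p, bf (p + q) = bf p := by
      intro p
      simp only [hbf]
      rw [hcgQperiod]
    -- rotation paths within Q
    have hQpathList : ∀ j : ℕ, ∃ LW : List V, ∃ hW0 : LW ≠ [], LW.Nodup ∧ LW.Chain' A ∧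
        ((∀ x ∈ LW, x ∉ LC) ∧ (∀ x ∈ LW, x ∈ Q)) ∧ LW.length = q ∧
        LW.head hW0 = cgQ j ∧ LW.getLast hW0 = cgQ (j + (q - 1)) := by
      intro j
      set LW : List V := (List.range q).map (fun k => cgQ (j + k)) with hLW
      have hlen : LW.length = q := by simp [hLW]
      have hW0 : LW ≠ [] := by
        intro he
        rw [he] at hlen
        simp at hlen
        omega
      have hget : ∀ p (hp : p < LW.length), LW[p] = cgQ (j + p) := by
        intro p hp
        simp [hLW]
      refine ⟨LW, hW0, ?_, ?_, ?_, hlen, ?_, ?_⟩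
      · rw [hLW]
        apply List.Nodup.map_on ?_ (List.nodup_range)
        intro a ha b hb he
        rw [List.mem_range] at ha hb
        have h1 := cg_inj hLQnd h0q he
        rcases Nat.le_total a b with hab | hab
        · have := mod_inj_small h0q h1 (by omega) (by omega)
          omega
        · have := mod_inj_small h0q h1.symm (by omega) (by omega)
          omega
      · apply List.isChain_iff_getElem.mpr
        intro p hp
        rw [hget p (by omega), hget (p+1) (by omega),
          ← Nat.add_assoc]
        exact hcgQarc (j + p)
      · constructor
        · intro x hx
          rw [hLW] at hx
          obtain ⟨k, _, rfl⟩ := List.mem_map.mp hx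
          exact (hmemR _).mp (hQR (hcgQmem _))
        · intro x hx
          rw [hLW] at hx
          obtain ⟨k, _, rfl⟩ := List.mem_map.mp hx
          exact hcgQmem _
      · rw [List.head_eq_getElem_zero hW0, hget 0 (by omega), Nat.add_zero]
      · rw [List.getLast_eq_getElem, hget _ (by omega)]
        congr 2
        omega
    -- F1
    have hF1 : ∀ p, l + 2 ≤ af p + bf p + q := by
      intro p
      have hwQ : cgQ p ∈ Q := hcgQmem p
      have hwR : cgQ p ∈ R := hQR hwQ
      have h1 := hdecomp (cgQ p) hwR
      have h3 : (R.filter (fun x => A (cgQ p) x)).card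
          = (Q.filter (fun x => A (cgQ p) x)).card + ((R \ Q).filter (fun x => A (cgQ p) x)).card :=
        card_filter_split _ R Q hQR
      have h4 : ((R \ Q).filter (fun x => A (cgQ p) x)).card = 0 := by
        rw [Finset.card_eq_zero, Finset.filter_eq_empty_iff]
        intro x hx
        rw [Finset.mem_sdiff] at hx
        exact hsink (cgQ p) hwQ x hx.1 hx.2
      have h5 : (R.filter (fun x => A x (cgQ p))).card
          = (Q.filter (fun x => A x (cgQ p))).card + ((R \ Q).filter (fun x => A x (cgQ p))).card :=
        card_filter_split _ R Q hQR
      have h6 : ((R \ Q).filter (fun x => A x (cgQ p))).card ≤ (R \ Q).card :=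
        Finset.card_le_card (Finset.filter_subset _ _)
      have h7 : (R \ Q).card = R.card - q := by rw [Finset.card_sdiff_of_subset hQR, hq]
      have h8 := Finset.card_le_card hQR
      have h9 : (Q.filter (fun x => A (cgQ p) x)).card ≤ q - 1 := by
        have hsub : Q.filter (fun x => A (cgQ p) x) ⊆ Q.erase (cgQ p) := by
          intro x hx
          rw [Finset.mem_erase]
          rw [Finset.mem_filter] at hx
          exact ⟨fun he => hloop (cgQ p) (he ▸ hx.2), hx.1⟩
        have := Finset.card_le_card hsub
        rwa [Finset.card_erase_of_mem hwQ] at this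
      have h10 : (Q.filter (fun x => A x (cgQ p))).card ≤ q - 1 := by
        have hsub : Q.filter (fun x => A x (cgQ p)) ⊆ Q.erase (cgQ p) := by
          intro x hx
          rw [Finset.mem_erase]
          rw [Finset.mem_filter] at hx
          exact ⟨fun he => hloop (cgQ p) (he ▸ hx.2), hx.1⟩
        have := Finset.card_le_card hsub
        rwa [Finset.card_erase_of_mem hwQ] at this
      simp only [haf, hbf]
      omega
    -- F2
    have hF2 : ∀ j, 1 ≤ af (j+1) → bf j + min l (af (j+1) + q - 1) ≤ l := by
      intro j haj
      obtain ⟨LW, hW0, hWnd, hWch, ⟨hWR, _⟩, hWlen, hWh, hWl⟩ := hQpathList (j+1)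
      have hne : (SinP A LC h0 (LW.head hW0)).Nonempty := by
        rw [hWh]
        apply Finset.card_pos.mp
        simp only [haf] at haj
        exact haj
      have hb := earB hLCnd hLCcyc hmaxLC h0 hW0 hWnd hWch hWR hne
      have hWl2 : LW.getLast hW0 = cgQ j := by
        rw [hWl, show j + 1 + (q - 1) = j + q by omega, hcgQperiod]
      rw [hWh, hWl2, hWlen, hLClen] at hb
      have hminq : min q l = q := by omega
      rw [hminq] at hb
      simp only [haf, hbf]
      omega
    -- F4 : some vertex of Q has an arc into the cycle
    have hF4 : ∃ p', p' < q ∧ 1 ≤ bf p' := by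
      have hLCne : LC ≠ [] := by
        intro he
        rw [he] at h0
        simp at h0
      have hc0 : LC.head hLCne ∈ LC := List.head_mem _
      have hcross := crossing (P := fun v => v ∈ Q) (hstrong u₀ (LC.head hLCne)) hu₀Q
        (fun hc => (hmemR _).mp (hQR hc) hc0)
      obtain ⟨x, y, hxQ, hyQ, hxy⟩ := hcross
      have hyC : y ∈ LC := by
        by_contra hyR
        exact hsink x hxQ y ((hmemR y).mpr hyR) hyQ hxy
      -- x = cgQ p' for some p' < q
      have hxLQ : x ∈ LQ := hLQall x hxQ
      obtain ⟨p', hp', hx⟩ := List.mem_iff_getElem.mp hxLQ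
      refine ⟨p', by omega, ?_⟩
      have hcgx : cgQ p' = x := by
        rw [hcgQ, cg_small h0q hp', hx]
      simp only [hbf]
      apply Finset.card_pos.mpr
      obtain ⟨pc, hpc, rfl⟩ := List.mem_iff_getElem.mp hyC
      refine ⟨pc, ?_⟩
      rw [SoutP, Finset.mem_filter, Finset.mem_range]
      refine ⟨hpc, ?_⟩
      rw [cg_small h0 hpc, hcgx]
      exact hxy

    -- F3 : some position has af at least 2
    have hF3 : ∃ j₀, 2 ≤ af j₀ := by
      have hLCne : LC ≠ [] := by intro he; rw [he] at h0; simp at h0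
      have hcross := crossing (P := fun v => v ∈ LC) (hstrong (LC.head hLCne) u₀)
        (List.head_mem _) (fun hc => (hmemR u₀).mp hu₀R hc)
      obtain ⟨a0, b0, ha0, hb0, hab0⟩ := hcross
      have hLL : ∀ z, Relation.ReflTransGen A z u₀ →
          ∃ y₁, y₁ ∈ R ∧ Relation.ReflTransGen RR y₁ u₀ ∧
            (y₁ = z ∨ ∃ c ∈ LC, A c y₁) := by
        intro z hz
        induction hz using Relation.ReflTransGen.head_induction_on with
        | refl => exact ⟨u₀, hu₀R, Relation.ReflTransGen.refl, Or.inl rfl⟩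
        | @head a c hac hcu ih =>
          obtain ⟨y₁, hy₁R, hy₁p, hcase⟩ := ih
          rcases hcase with rfl | hyin
          · by_cases haC : a ∈ LC
            · exact ⟨y₁, hy₁R, hy₁p, Or.inr ⟨a, haC, hac⟩⟩
            · have haR : a ∈ R := (hmemR a).mpr haC
              exact ⟨a, haR, hy₁p.head ⟨hac, haR, hy₁R⟩, Or.inl rfl⟩
          · exact ⟨y₁, hy₁R, hy₁p, Or.inr hyin⟩
      obtain ⟨y₁, hy₁R, hy₁p, hy₁case⟩ := hLL b0 (hstrong b0 u₀)
      have hy₁in : ∃ c ∈ LC, A c y₁ := by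
        rcases hy₁case with rfl | h
        · exact ⟨a0, ha0, hab0⟩
        · exact h
      obtain ⟨L0, hL0ch, hL0nd, hL0ne, hL0h, hL0l⟩ := exists_nodup_path hy₁p
      have hL0R : ∀ x ∈ L0, x ∈ R := by
        apply chain_all_mem hL0ch (fun a b hab => hab.2.2) hL0ne
        rw [hL0h]; exact hy₁R
      have hQlast : (fun v => v ∈ Q) (L0.getLast hL0ne) := by
        simp only
        rw [hL0l]; exact hu₀Q
      obtain ⟨L1, hL1pre, hL1ne, hL1h, hL1last, hL1drop⟩ := prefix_until L0 hL0ne hQlast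
      have hL1nd : L1.Nodup := hL0nd.sublist hL1pre.sublist
      have hL1ch : L1.Chain' RR := hL0ch.prefix hL1pre
      have hL1R : ∀ x ∈ L1, x ∈ R := fun x hx => hL0R x (hL1pre.sublist.subset hx)
      have huaQ : L1.getLast hL1ne ∈ Q := hL1last
      obtain ⟨pa, hpa, hua⟩ := List.mem_iff_getElem.mp (hLQall _ huaQ)
      have hcga : cgQ pa = L1.getLast hL1ne := by rw [hcgQ, cg_small h0q hpa, hua]
      obtain ⟨LW, hW0, hWnd, hWch, ⟨hWRC, hWRQ⟩, hWlen, hWh, hWl⟩ := hQpathList pa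
      set EP : List V := L1.dropLast ++ LW with hEP
      have hEPne : EP ≠ [] := by
        rw [hEP]; intro he; rw [List.append_eq_nil_iff] at he; exact hW0 he.2
      have hEPlen : q ≤ EP.length := by rw [hEP, List.length_append]; omega
      have hEPnd : EP.Nodup := by
        rw [hEP, List.nodup_append']
        refine ⟨hL1nd.sublist (List.dropLast_sublist _), hWnd, ?_⟩
        intro x hx hx2
        exact hL1drop x hx (hWRQ x hx2)
      have hEPch : EP.Chain' A := by
        rw [hEP]
        refine List.isChain_append.mpr ⟨(hL1ch.prefix (List.dropLast_prefix _)).imp (fun a b hab => hab.1), hWch, ?_⟩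
        intro x hx y hy
        have hdne : L1.dropLast ≠ [] := by
          intro he; rw [he] at hx; simp at hx
        rw [List.getLast?_eq_getLast hdne, Option.mem_def, Option.some_inj] at hx
        rw [List.head?_eq_head hW0, Option.mem_def, Option.some_inj] at hy
        subst hx; subst hy
        rw [hWh, hcga]
        exact (chain'_last_step hL1ch hL1ne hdne).1
      have hEPRC : ∀ x ∈ EP, x ∉ LC := by
        intro x hx
        rw [hEP, List.mem_append] at hx
        rcases hx with hx | hx
        · exact (hmemR x).mp (hL1R x ((List.dropLast_sublist _).subset hx))
        · exact hWRC x hx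
      have hEPhd : EP.head hEPne = y₁ := by
        have hEPne' : L1.dropLast ++ LW ≠ [] := by
          intro he; rw [List.append_eq_nil_iff] at he; exact hW0 he.2
        have e0 : EP.head hEPne = (L1.dropLast ++ LW).head hEPne' := head_congr hEP _ _
        by_cases hdne : L1.dropLast = []
        · have hL1len : L1.length = 1 := by
            have h7 := List.length_dropLast (xs := L1)
            have h8 := List.length_pos_iff.mpr hL1ne
            rw [hdne] at h7
            simp at h7
            omega
          obtain ⟨a, ha⟩ := List.length_eq_one_iff.mp hL1len
          have e1 : (L1.dropLast ++ LW).head hEPne' = LW.head hW0 := by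
            apply head_congr
            rw [hdne, List.nil_append]
          rw [e0, e1, hWh, hcga]
          have e2 : L1.getLast hL1ne = L1.head hL1ne := by
            rw [getLast_congr ha hL1ne (by simp), head_congr ha hL1ne (by simp)]
            simp
          rw [e2, hL1h, hL0h]
        · have e1 : (L1.dropLast ++ LW).head hEPne' = L1.dropLast.head hdne :=
            List.head_append_left hdne
          rw [e0, e1, head_dropLast hdne hL1ne, hL1h, hL0h]
      have hEPlast : EP.getLast hEPne = cgQ (pa + (q-1)) := by
        have e1 : EP.getLast hEPne = (L1.dropLast ++ LW).getLast
            (by rw [← hEP]; exact hEPne) := getLast_congr hEP _ _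
        rw [e1, List.getLast_append_of_ne_nil _ hW0, hWl]
      have hSinne : (SinP A LC h0 (EP.head hEPne)).Nonempty := by
        rw [hEPhd]
        obtain ⟨c, hcLC, hcy⟩ := hy₁in
        obtain ⟨pc, hpc, rfl⟩ := List.mem_iff_getElem.mp hcLC
        refine ⟨pc, ?_⟩
        rw [SinP, Finset.mem_filter, Finset.mem_range]
        exact ⟨hpc, by rw [cg_small h0 hpc]; exact hcy⟩
      have hb := earB hLCnd hLCcyc hmaxLC h0 hEPne hEPnd hEPch hEPRC hSinne
      rw [hEPlast, hLClen, hEPhd] at hb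
      have h1 : 1 ≤ (SinP A LC h0 y₁).card := by
        apply Finset.card_pos.mpr
        rwa [hEPhd] at hSinne
      refine ⟨pa + (q-1), ?_⟩
      have h3 := hF1 (pa + (q-1))
      simp only [hbf] at h3
      omega
    -- final arithmetic
    obtain ⟨j₀, hj₀⟩ := hF3
    obtain ⟨p', hp'q, hbp'⟩ := hF4
    have hclaim : ∀ s, min (2+s) (l - q + 2) ≤ af (j₀ + s*(q-1)) := by
      intro s
      induction s with
      | zero =>
        rw [show j₀ + 0*(q-1) = j₀ by omega]
        omega
      | succ s ih =>
        have hidx : j₀ + (s+1)*(q-1) = (j₀ + s*(q-1)) + (q-1) := by ring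
        have hai : 1 ≤ af (j₀ + s*(q-1)) := by omega
        have hper : af ((j₀ + s*(q-1)) + (q-1) + 1) = af (j₀ + s*(q-1)) := by
          rw [show (j₀ + s*(q-1)) + (q-1) + 1 = (j₀ + s*(q-1)) + q by omega, haf_per]
        have h2 := hF2 ((j₀ + s*(q-1)) + (q-1)) (by rw [hper]; exact hai)
        rw [hper] at h2
        have h3 := hF1 ((j₀ + s*(q-1)) + (q-1))
        rw [hidx]
        omega
    have hmaxed : ∀ t, l - q + 2 ≤ af (j₀ + (l + t)*(q-1)) := by
      intro t
      have := hclaim (l + t)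
      omega
    have hbeta0 : ∀ t, bf (j₀ + (l + t)*(q-1) + (q-1)) = 0 := by
      intro t
      have ha := hmaxed t
      have hper : af (j₀ + (l+t)*(q-1) + (q-1) + 1) = af (j₀ + (l+t)*(q-1)) := by
        rw [show j₀ + (l+t)*(q-1) + (q-1) + 1 = j₀ + (l+t)*(q-1) + q by omega, haf_per]
      have h2 := hF2 (j₀ + (l+t)*(q-1) + (q-1)) (by rw [hper]; omega)
      rw [hper] at h2
      omega
    have hbf_perq : ∀ s x, bf (x + s*q) = bf x := by
      intro s
      induction s with
      | zero => intro x; simp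
      | succ s ih =>
        intro x
        rw [show x + (s+1)*q = (x + s*q) + q by ring, hbf_per, ih]
    have hcontra : bf p' = 0 := by
      set J := j₀ + l*(q-1) with hJ
      set t := J + q - p' with ht
      have h1 : t*(q-1) = t*q - t := by rw [Nat.mul_sub, Nat.mul_one]
      have h2 : (t-1)*q = t*q - q := by rw [Nat.sub_mul, Nat.one_mul]
      have h3 : t ≤ t*q := Nat.le_mul_of_pos_right t (by omega)
      have h4 : q ≤ t*q := Nat.le_mul_of_pos_left q (by omega)
      have hkey : J + t*(q-1) = p' + (t-1)*q := by omega
      have hz := hbeta0 (t-1)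
      have h5 : t*(q-1) = (t-1)*(q-1) + (q-1) := by
        conv_lhs => rw [show t = (t-1)+1 by omega]
        rw [Nat.succ_mul]
      have h6 : (l+(t-1))*(q-1) = l*(q-1) + (t-1)*(q-1) := Nat.add_mul l (t-1) (q-1)
      have hidx2 : j₀ + (l+(t-1))*(q-1) + (q-1) = J + t*(q-1) := by
        rw [hJ]
        omega
      rw [hidx2, hkey, hbf_perq (t-1) p'] at hz
      exact hz
    omega



end GH


/-- Ghouila-Houri: a strongly connected digraph on `n > 2` vertices with
`d⁺(v) + d⁻(v) ≥ n` for every vertex is Hamiltonian. -/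
theorem stmt_3 {V : Type*} [Fintype V] [DecidableEq V] (A : V → V → Prop) [DecidableRel A]
    (hloopless : ∀ v, ¬ A v v)
    (hn : 2 < Fintype.card V)
    (hstrong : ∀ u v : V, Relation.ReflTransGen A u v)
    (hdeg : ∀ v, Fintype.card V ≤ outDeg A v + inDeg A v) :
    DHamiltonian A := by
  obtain ⟨L, hnd, hall, hcyc⟩ := GH.aux (Fintype.card V) A le_rfl hloopless hstrong hdeg
  have htf : L.toFinset = Finset.univ :=
    Finset.eq_univ_iff_forall.mpr (fun x => List.mem_toFinset.mpr (hall x))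
  have hlen : L.length = Fintype.card V := by
    have h2 := List.toFinset_card_of_nodup hnd
    rw [htf, Finset.card_univ] at h2
    omega
  have h2len : 2 ≤ L.length := by omega
  refine ⟨L.formPerm, List.isCycle_formPerm hnd h2len, ?_, ?_⟩
  · rw [List.support_formPerm_of_nodup L hnd ?_, htf]
    intro x he
    rw [he] at hlen
    simp at hlen
    omega
  · intro v
    obtain ⟨k, hk, rfl⟩ := List.mem_iff_getElem.mp (hall v)
    rw [List.formPerm_apply_getElem L hnd k hk]
    exact GH.cyc_getElem hcyc hk
end

section
/- Let G be a balanced bipartite graph with parts X, Y of size n each. If for every pair of nonadjacent vertices u ∈ X, v ∈ Y one has d(u) + d(v) ≥ n, then G contains a perfect matching. -/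
open Finset Sum

variable {α β : Type*} [Fintype α] [Fintype β]
/-- A balanced bipartite graph with parts of size `n` in which every pair of
nonadjacent vertices `u ∈ X`, `v ∈ Y` satisfies `d(u) + d(v) ≥ n` has a perfect
matching. -/
theorem stmt_6 (n : ℕ) (hn : 1 ≤ n)
    (hα : Fintype.card α = n) (hβ : Fintype.card β = n)
    (G : SimpleGraph (α ⊕ β)) [DecidableRel G.Adj]
    (hbip : ∀ x y, G.Adj x y → (x.isLeft ∧ y.isRight) ∨ (x.isRight ∧ y.isLeft))
    (hdeg : ∀ (a : α) (b : β), ¬ G.Adj (Sum.inl a) (Sum.inr b) →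
      n ≤ G.degree (Sum.inl a) + G.degree (Sum.inr b)) :
    ∃ M : G.Subgraph, M.IsPerfectMatching := by
  classical
  -- the neighbor sets, viewed in β and α
  set r : α → Finset β := fun a => univ.filter (fun b => G.Adj (inl a) (inr b)) with hr
  set l : β → Finset α := fun b => univ.filter (fun a => G.Adj (inl a) (inr b)) with hl
  have degl : ∀ a : α, G.degree (inl a) = (r a).card := by
    intro a
    rw [← SimpleGraph.card_neighborFinset_eq_degree]
    have : G.neighborFinset (inl a) = (r a).image inr := by
      ext y
      simp only [SimpleGraph.mem_neighborFinset, mem_image, hr, mem_filter, mem_univ,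
        true_and]
      constructor
      · intro h
        rcases hbip _ _ h with ⟨h1, h2⟩ | ⟨h1, _⟩
        · rcases y with y | y
          · simp at h2
          · exact ⟨y, h, rfl⟩
        · simp at h1
      · rintro ⟨b, hb, rfl⟩; exact hb
    rw [this, card_image_of_injective _ inr_injective]
  have degr : ∀ b : β, G.degree (inr b) = (l b).card := by
    intro b
    rw [← SimpleGraph.card_neighborFinset_eq_degree]
    have : G.neighborFinset (inr b) = (l b).image inl := by
      ext y
      simp only [SimpleGraph.mem_neighborFinset, mem_image, hl, mem_filter, mem_univ,
        true_and]
      constructor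
      · intro h
        rcases hbip _ _ h with ⟨h1, _⟩ | ⟨_, h2⟩
        · simp at h1
        · rcases y with y | y
          · exact ⟨y, h.symm, rfl⟩
          · simp at h2
      · rintro ⟨a, ha, rfl⟩; exact ha.symm
    rw [this, card_image_of_injective _ inl_injective]
  -- Hall's condition
  have hall : ∀ s : Finset α, s.card ≤ (s.biUnion r).card := by
    intro s
    rcases s.eq_empty_or_nonempty with rfl | ⟨a, ha⟩
    · simp
    by_contra hcon
    push_neg at hcon
    have hsn : s.card ≤ n := hα ▸ card_le_univ s
    have hlt : (s.biUnion r).card < n := lt_of_lt_of_le hcon hsn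
    -- get b outside the neighborhood of s
    have : (s.biUnion r) ≠ univ := by
      intro h; rw [h, card_univ, hβ] at hlt; omega
    obtain ⟨b, hb⟩ : ∃ b, b ∉ s.biUnion r := by
      by_contra h; push_neg at h; exact this (eq_univ_iff_forall.mpr h)
    have hnadj : ∀ a' ∈ s, ¬ G.Adj (inl a') (inr b) := by
      intro a' ha' hadj
      exact hb (mem_biUnion.mpr ⟨a', ha', by simp [hr, hadj]⟩)
    have h1 : (r a).card ≤ (s.biUnion r).card :=
      card_le_card (subset_biUnion_of_mem r ha)
    have h2 : (l b).card ≤ n - s.card := by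
      have hsub : l b ⊆ univ \ s := by
        intro a' ha'
        simp only [hl, mem_filter, mem_univ, true_and] at ha'
        simp only [mem_sdiff, mem_univ, true_and]
        exact fun hs => hnadj a' hs ha'
      calc (l b).card ≤ (univ \ s).card := card_le_card hsub
        _ = n - s.card := by rw [card_sdiff_of_subset (subset_univ s), card_univ, hα]
    have hd := hdeg a b (hnadj a ha)
    rw [degl, degr] at hd
    omega
  obtain ⟨f, hfinj, hf⟩ := (Finset.all_card_le_biUnion_card_iff_exists_injective r).mp hall
  have hfadj : ∀ a, G.Adj (inl a) (inr (f a)) := by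
    intro a; have := hf a; simp only [hr, mem_filter] at this; exact this.2
  have hfbij : Function.Bijective f :=
    (Fintype.bijective_iff_injective_and_card f).mpr ⟨hfinj, by rw [hα, hβ]⟩
  let M : G.Subgraph :=
  { verts := Set.univ
    Adj := fun x y => (∃ a, x = inl a ∧ y = inr (f a)) ∨ (∃ a, x = inr (f a) ∧ y = inl a)
    adj_sub := by
      rintro x y (⟨a, rfl, rfl⟩ | ⟨a, rfl, rfl⟩)
      · exact hfadj a
      · exact (hfadj a).symm
    edge_vert := fun _ => Set.mem_univ _
    symm := ⟨by
      rintro x y (⟨a, rfl, rfl⟩ | ⟨a, rfl, rfl⟩)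
      · exact Or.inr ⟨a, rfl, rfl⟩
      · exact Or.inl ⟨a, rfl, rfl⟩⟩ }
  refine ⟨M, ?_, fun v => Set.mem_univ v⟩
  rintro v -
  rcases v with a | b
  · refine ⟨inr (f a), Or.inl ⟨a, rfl, rfl⟩, ?_⟩
    rintro y (⟨a', ha', rfl⟩ | ⟨a', ha', rfl⟩)
    · cases inl_injective (ha' : (inl a : α ⊕ β) = inl a'); rfl
    · simp at ha'
  · obtain ⟨a, rfl⟩ := hfbij.surjective b
    refine ⟨inl a, Or.inr ⟨a, rfl, rfl⟩, ?_⟩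
    rintro y (⟨a', ha', rfl⟩ | ⟨a', ha', rfl⟩)
    · simp at ha'
    · cases hfinj (inr_injective (ha' : (inr (f a) : α ⊕ β) = inr (f a'))); rfl
end

section
/- Let G be a balanced bipartite graph with parts X, Y of size n each, n > 1. If for every pair of nonadjacent vertices u ∈ X, v ∈ Y one has d(u) + d(v) ≥ n + 2, then G contains at least two disjoint perfect matchings. -/
variable {α β : Type*} [Fintype α] [Fintype β]

open Finset Sum

/-- The subgraph of a bipartite graph given by a bijection `α ≃ β` all of whose
pairs are edges. -/
def bijSubgraph (G : SimpleGraph (α ⊕ β)) (f : α ≃ β)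
    (hf : ∀ a, G.Adj (inl a) (inr (f a))) : G.Subgraph where
  verts := Set.univ
  Adj x y := ∃ a, (x = inl a ∧ y = inr (f a)) ∨ (y = inl a ∧ x = inr (f a))
  adj_sub := by
    rintro x y ⟨a, ⟨rfl, rfl⟩ | ⟨rfl, rfl⟩⟩
    · exact hf a
    · exact (hf a).symm
  edge_vert := by intros; trivial
  symm := by
    constructor
    rintro x y ⟨a, h | h⟩
    · exact ⟨a, Or.inr h⟩
    · exact ⟨a, Or.inl h⟩

lemma bijSubgraph_isPerfectMatching (G : SimpleGraph (α ⊕ β)) (f : α ≃ β)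
    (hf : ∀ a, G.Adj (inl a) (inr (f a))) :
    (bijSubgraph G f hf).IsPerfectMatching := by
  constructor
  · rintro (a | b) _
    · refine ⟨inr (f a), ⟨a, Or.inl ⟨rfl, rfl⟩⟩, ?_⟩
      rintro y ⟨a', ⟨h1, rfl⟩ | ⟨rfl, h2⟩⟩
      · rw [inl.injEq] at h1; rw [h1]
      · simp at h2
    · refine ⟨inl (f.symm b), ⟨f.symm b, Or.inr ⟨rfl, by rw [Equiv.apply_symm_apply]⟩⟩, ?_⟩
      rintro y ⟨a', ⟨h1, rfl⟩ | ⟨rfl, h2⟩⟩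
      · simp at h1
      · rw [inr.injEq] at h2
        rw [h2, Equiv.symm_apply_apply]
  · intro x; trivial

lemma bijSubgraph_edge (G : SimpleGraph (α ⊕ β)) (f : α ≃ β)
    (hf : ∀ a, G.Adj (inl a) (inr (f a))) {a : α} {b : β}
    (h : (bijSubgraph G f hf).Adj (inl a) (inr b)) : b = f a := by
  obtain ⟨a', ⟨h1, h2⟩ | ⟨h1, h2⟩⟩ := h
  · rw [inl.injEq] at h1
    rw [inr.injEq] at h2
    rw [h2, h1]
  · simp at h1

/-- A balanced bipartite graph with parts of size `n > 1` in which every pair of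
nonadjacent vertices `u ∈ X`, `v ∈ Y` satisfies `d(u) + d(v) ≥ n + 2` contains two
disjoint perfect matchings. -/
theorem stmt_7 (n : ℕ) (hn : 1 < n)
    (hα : Fintype.card α = n) (hβ : Fintype.card β = n)
    (G : SimpleGraph (α ⊕ β)) [DecidableRel G.Adj]
    (hbip : ∀ x y, G.Adj x y → (x.isLeft ∧ y.isRight) ∨ (x.isRight ∧ y.isLeft))
    (hdeg : ∀ (a : α) (b : β), ¬ G.Adj (Sum.inl a) (Sum.inr b) →
      n + 2 ≤ G.degree (Sum.inl a) + G.degree (Sum.inr b)) :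
    ∃ M₁ M₂ : G.Subgraph, M₁.IsPerfectMatching ∧ M₂.IsPerfectMatching ∧
      Disjoint M₁.edgeSet M₂.edgeSet := by
  classical
  -- neighbor finsets on each side
  set t : α → Finset β := fun a => univ.filter (fun b => G.Adj (inl a) (inr b)) with ht
  set s : β → Finset α := fun b => univ.filter (fun a => G.Adj (inl a) (inr b)) with hs
  have deg_inl : ∀ a : α, G.degree (inl a) = (t a).card := by
    intro a
    rw [← SimpleGraph.card_neighborFinset_eq_degree]
    rw [show G.neighborFinset (inl a) = (t a).image inr by
      ext x
      simp only [SimpleGraph.mem_neighborFinset, mem_image, ht, mem_filter, mem_univ, true_and]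
      constructor
      · intro h
        rcases hbip _ _ h with ⟨_, hr⟩ | ⟨hl, _⟩
        · obtain ⟨b, rfl⟩ := isRight_iff.mp hr
          exact ⟨b, h, rfl⟩
        · simp at hl
      · rintro ⟨b, hb, rfl⟩; exact hb]
    exact (card_image_of_injective _ inr_injective)
  have deg_inr : ∀ b : β, G.degree (inr b) = (s b).card := by
    intro b
    rw [← SimpleGraph.card_neighborFinset_eq_degree]
    rw [show G.neighborFinset (inr b) = (s b).image inl by
      ext x
      simp only [SimpleGraph.mem_neighborFinset, mem_image, hs, mem_filter, mem_univ, true_and]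
      constructor
      · intro h
        rcases hbip _ _ h with ⟨hl, _⟩ | ⟨_, hr⟩
        · simp at hl
        · obtain ⟨a, rfl⟩ := isLeft_iff.mp hr
          exact ⟨a, h.symm, rfl⟩
      · rintro ⟨a, ha, rfl⟩; exact ha.symm]
    exact (card_image_of_injective _ inl_injective)
  have cardS : ∀ S : Finset α, S.card ≤ n := fun S => hα ▸ card_le_univ S
  have cardT : ∀ T : Finset β, T.card ≤ n := fun T => hβ ▸ card_le_univ T
  -- Hall's condition for G
  have hall1 : ∀ S : Finset α, S.card ≤ (S.biUnion t).card := by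
    intro S
    by_contra hcon
    push_neg at hcon
    set T := S.biUnion t with hT
    have hS : S.Nonempty := card_pos.mp (lt_of_le_of_lt (Nat.zero_le _) hcon)
    obtain ⟨u, hu⟩ := hS
    obtain ⟨v, hv⟩ : ∃ v, v ∉ T := by
      by_contra hall
      push_neg at hall
      have hTu : T = univ := eq_univ_iff_forall.mpr hall
      have := cardS S
      rw [hTu, card_univ, hβ] at hcon
      omega
    have hadj : ¬ G.Adj (inl u) (inr v) := by
      intro h'
      exact hv (mem_biUnion.mpr ⟨u, hu, mem_filter.mpr ⟨mem_univ _, h'⟩⟩)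
    have h1 := hdeg u v hadj
    have d1 : G.degree (inl u) ≤ T.card := by
      rw [deg_inl]
      exact card_le_card (fun b hb => mem_biUnion.mpr ⟨u, hu, hb⟩)
    have d2 : G.degree (inr v) ≤ n - S.card := by
      rw [deg_inr]
      have hsub : s v ⊆ univ \ S := by
        intro a ha
        rw [mem_sdiff]
        refine ⟨mem_univ _, fun haS => ?_⟩
        rw [hs, mem_filter] at ha
        exact hv (mem_biUnion.mpr ⟨a, haS, mem_filter.mpr ⟨mem_univ _, ha.2⟩⟩)
      calc (s v).card ≤ (univ \ S).card := card_le_card hsub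
        _ = n - S.card := by rw [card_sdiff_of_subset (subset_univ S), card_univ, hα]
    have := cardS S
    omega
  obtain ⟨f, hfinj, hfmem⟩ :=
    (Finset.all_card_le_biUnion_card_iff_exists_injective t).mp hall1
  have hfadj : ∀ a, G.Adj (inl a) (inr (f a)) := by
    intro a
    have := hfmem a
    rw [ht, mem_filter] at this
    exact this.2
  have hfbij : Function.Bijective f :=
    (Fintype.bijective_iff_injective_and_card f).mpr ⟨hfinj, by rw [hα, hβ]⟩
  set F : α ≃ β := Equiv.ofBijective f hfbij with hF
  have hFapp : ∀ a, F a = f a := fun a => rfl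
  -- Hall's condition for G minus the first matching
  set t' : α → Finset β := fun a => univ.filter (fun b => G.Adj (inl a) (inr b) ∧ b ≠ f a)
    with ht'
  have hall2 : ∀ S : Finset α, S.card ≤ (S.biUnion t').card := by
    intro S
    by_contra hcon
    push_neg at hcon
    set T := S.biUnion t' with hT
    have hS : S.Nonempty := card_pos.mp (lt_of_le_of_lt (Nat.zero_le _) hcon)
    have hScard : 1 ≤ S.card := card_pos.mpr hS
    have hTn : T.card < n := lt_of_lt_of_le hcon (cardS S)
    -- find u ∈ S, v ∉ T with v ≠ f u
    obtain ⟨u, hu, v, hv, hvf⟩ : ∃ u ∈ S, ∃ v, v ∉ T ∧ v ≠ f u := by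
      obtain ⟨v₀, hv₀⟩ : ∃ v, v ∉ T := by
        by_contra hall
        push_neg at hall
        have hTu : T = univ := eq_univ_iff_forall.mpr hall
        rw [hTu, card_univ, hβ] at hTn
        omega
      by_cases hS2 : 2 ≤ S.card
      · obtain ⟨u₁, hu₁, u₂, hu₂, hne⟩ := one_lt_card.mp hS2
        by_cases h1 : v₀ = f u₁
        · refine ⟨u₂, hu₂, v₀, hv₀, ?_⟩
          intro h2
          exact hne (hfinj (h1.symm.trans h2))
        · exact ⟨u₁, hu₁, v₀, hv₀, h1⟩
      · -- S.card = 1, so T = ∅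
        have hS1 : S.card = 1 := by omega
        obtain ⟨u, hu⟩ := hS
        have hT0 : T = ∅ := by
          rw [← card_eq_zero]; omega
        obtain ⟨v, hvne⟩ := Fintype.exists_ne_of_one_lt_card (by rw [hβ]; omega) (f u)
        exact ⟨u, hu, v, by rw [hT0]; exact notMem_empty v, hvne⟩
    have hadj : ¬ G.Adj (inl u) (inr v) := by
      intro h'
      exact hv (mem_biUnion.mpr ⟨u, hu, mem_filter.mpr ⟨mem_univ _, h', hvf⟩⟩)
    have h1 := hdeg u v hadj
    have d1 : G.degree (inl u) ≤ T.card + 1 := by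
      rw [deg_inl]
      have hsub : t u ⊆ insert (f u) T := by
        intro b hb
        rw [ht, mem_filter] at hb
        rw [mem_insert]
        by_cases hbf : b = f u
        · exact Or.inl hbf
        · exact Or.inr (mem_biUnion.mpr ⟨u, hu, mem_filter.mpr ⟨mem_univ _, hb.2, hbf⟩⟩)
      calc (t u).card ≤ (insert (f u) T).card := card_le_card hsub
        _ ≤ T.card + 1 := card_insert_le _ _
    have d2 : G.degree (inr v) ≤ n - S.card + 1 := by
      rw [deg_inr]
      have hsub : s v ⊆ insert (F.symm v) (univ \ S) := by
        intro a ha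
        rw [hs, mem_filter] at ha
        rw [mem_insert, mem_sdiff]
        by_cases haS : a ∈ S
        · left
          have hvfa : v = f a := by
            by_contra hvfa
            exact hv (mem_biUnion.mpr ⟨a, haS, mem_filter.mpr ⟨mem_univ _, ha.2, hvfa⟩⟩)
          have : F a = v := (hFapp a).trans hvfa.symm
          rw [← this, Equiv.symm_apply_apply]
        · exact Or.inr ⟨mem_univ _, haS⟩
      calc (s v).card ≤ (insert (F.symm v) (univ \ S)).card := card_le_card hsub
        _ ≤ (univ \ S).card + 1 := card_insert_le _ _
        _ = n - S.card + 1 := by rw [card_sdiff_of_subset (subset_univ S), card_univ, hα]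
    have := cardS S
    omega
  obtain ⟨g, hginj, hgmem⟩ :=
    (Finset.all_card_le_biUnion_card_iff_exists_injective t').mp hall2
  have hgadj : ∀ a, G.Adj (inl a) (inr (g a)) := by
    intro a
    have := hgmem a
    rw [ht', mem_filter] at this
    exact this.2.1
  have hgne : ∀ a, g a ≠ f a := by
    intro a
    have := hgmem a
    rw [ht', mem_filter] at this
    exact this.2.2
  have hgbij : Function.Bijective g :=
    (Fintype.bijective_iff_injective_and_card g).mpr ⟨hginj, by rw [hα, hβ]⟩
  set Ge : α ≃ β := Equiv.ofBijective g hgbij with hGe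
  refine ⟨bijSubgraph G F hfadj, bijSubgraph G Ge hgadj,
    bijSubgraph_isPerfectMatching G F hfadj, bijSubgraph_isPerfectMatching G Ge hgadj, ?_⟩
  rw [Set.disjoint_left]
  intro e he1 he2
  induction e with
  | _ x y =>
    rw [SimpleGraph.Subgraph.mem_edgeSet] at he1 he2
    obtain ⟨a, ⟨rfl, rfl⟩ | ⟨rfl, rfl⟩⟩ := he1
    · have := bijSubgraph_edge G Ge hgadj he2
      exact hgne a (((hFapp a) ▸ this).symm)
    · have := bijSubgraph_edge G Ge hgadj he2.symm
      exact hgne a (((hFapp a) ▸ this).symm)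
end

section
/- Let D be a strongly connected digraph on n > 2 vertices whose Z-mapping graph G satisfies: every vertex of G has degree greater than n/2. Then D contains two arc-disjoint spanning subdigraphs each of which is a cycle factor. -/
open Finset

def swapFunA (m : ℕ) : (Fin (m+1) ⊕ Fin m) → (Fin (m+1) ⊕ Fin m)
  | Sum.inl i => if h : i = 0 then Sum.inl 0 else Sum.inr (i.pred h)
  | Sum.inr j => Sum.inl j.succ

def swapFunB (m : ℕ) : (Fin (m+1) ⊕ Fin m) → (Fin (m+1) ⊕ Fin m)
  | Sum.inl i => if h : (i : ℕ) < m then Sum.inr ⟨i, h⟩ else Sum.inl i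
  | Sum.inr j => Sum.inl ⟨j, Nat.lt_succ_of_lt j.isLt⟩

lemma swapFunA_inv (m : ℕ) : Function.Involutive (swapFunA m) := by
  rintro (i | j)
  · by_cases h : i = 0
    · simp [swapFunA, h]
    · simp [swapFunA, h, Fin.succ_ne_zero, Fin.succ_pred]
  · simp [swapFunA, Fin.succ_ne_zero, Fin.pred_succ]

lemma swapFunB_inv (m : ℕ) : Function.Involutive (swapFunB m) := by
  rintro (i | j)
  · by_cases h : (i : ℕ) < m
    · simp [swapFunB, h, Fin.ext_iff]
    · simp [swapFunB, h]
  · simp only [swapFunB]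
    have hj : ((⟨(j : ℕ), Nat.lt_succ_of_lt j.isLt⟩ : Fin (m+1)) : ℕ) < m := j.isLt
    simp [hj]

lemma swap_ne (m : ℕ) (hm : 1 ≤ m) :
    ∀ w, swapFunA m w ≠ swapFunB m w := by
  rintro (i | j)
  · by_cases h : i = 0
    · subst h
      have h0 : (0 : ℕ) < m := hm
      simp [swapFunA, swapFunB, h0]
    · by_cases h2 : (i : ℕ) < m
      · simp only [swapFunA, swapFunB, h, h2, dif_neg, dif_pos, not_false_iff]
        intro he
        have := Sum.inr_injective he
        have hval := congrArg Fin.val this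
        have hne : (i : ℕ) ≠ 0 := fun hh => h (Fin.ext hh)
        simp [Fin.pred] at hval
        omega
      · simp [swapFunA, swapFunB, h, h2]
  · simp only [swapFunA, swapFunB]
    intro he
    have := Sum.inl_injective he
    have hval := congrArg Fin.val this
    simp [Fin.val_succ] at hval



/-- A strongly connected digraph on `n > 2` vertices whose Z-mapping graph has all
degrees greater than `n/2` contains two arc-disjoint cycle factors. -/
theorem stmt_15 {V : Type*} [Fintype V] [DecidableEq V] (A : V → V → Prop)
    (hloopless : ∀ v, ¬ A v v)
    (hn : 2 < Fintype.card V)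
    (hstrong : ∀ u v : V, Relation.ReflTransGen A u v)
    (hdeg : ∀ x : V ⊕ V, Fintype.card V < 2 * ((Zmap A).neighborSet x).ncard) :
    ∃ σ₁ σ₂ : Equiv.Perm V, (∀ v, A v (σ₁ v)) ∧ (∀ v, A v (σ₂ v)) ∧
      (∀ v, σ₁ v ≠ σ₂ v) := by
  classical
  -- degree hypotheses in Finset form
  have hout : ∀ v : V, Fintype.card V + 1 ≤ 2 * (univ.filter (fun w => A v w)).card := by
    intro v
    have h := hdeg (Sum.inl v)
    have hset : (Zmap A).neighborSet (Sum.inl v) = Sum.inr '' {w | A v w} := by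
      ext y
      simp only [SimpleGraph.mem_neighborSet, Zmap, Set.mem_image, Set.mem_setOf_eq]
      constructor
      · rintro (⟨u, w, haw, h1, h2⟩ | ⟨u, w, haw, h1, h2⟩)
        · obtain rfl := Sum.inl_injective h1
          exact ⟨w, haw, h2.symm⟩
        · exact absurd h1 (by simp)
      · rintro ⟨w, hw, rfl⟩
        exact Or.inl ⟨v, w, hw, rfl, rfl⟩
    rw [hset, Set.ncard_image_of_injective _ Sum.inr_injective,
      Set.ncard_eq_toFinset_card'] at h
    simpa [Set.toFinset_setOf] using h
  have hin : ∀ w : V, Fintype.card V + 1 ≤ 2 * (univ.filter (fun v => A v w)).card := by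
    intro w
    have h := hdeg (Sum.inr w)
    have hset : (Zmap A).neighborSet (Sum.inr w) = Sum.inl '' {v | A v w} := by
      ext y
      simp only [SimpleGraph.mem_neighborSet, Zmap, Set.mem_image, Set.mem_setOf_eq]
      constructor
      · rintro (⟨u, w', haw, h1, h2⟩ | ⟨u, w', haw, h1, h2⟩)
        · exact absurd h1 (by simp)
        · obtain rfl := Sum.inr_injective h1
          exact ⟨u, haw, h2.symm⟩
      · rintro ⟨v, hv, rfl⟩
        exact Or.inr ⟨v, w, hv, rfl, rfl⟩
    rw [hset, Set.ncard_image_of_injective _ Sum.inl_injective,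
      Set.ncard_eq_toFinset_card'] at h
    simpa [Set.toFinset_setOf] using h
  -- Hall condition for the out-neighborhoods
  have hall1 : ∀ fs : Finset V,
      fs.card ≤ (fs.biUnion (fun v => univ.filter (fun w => A v w))).card := by
    intro fs
    by_contra hc
    push_neg at hc
    obtain ⟨v₀, hv₀⟩ := card_pos.mp (lt_of_le_of_lt (Nat.zero_le _) hc)
    have hBU : (univ.filter (fun w => A v₀ w)) ⊆
        fs.biUnion (fun v => univ.filter (fun w => A v w)) :=
      subset_biUnion_of_mem (fun v => univ.filter (fun w => A v w)) hv₀
    have h1 := card_le_card hBU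
    have hfsn : fs.card ≤ Fintype.card V := card_le_univ fs
    obtain ⟨u, hu⟩ : ∃ u, u ∉ fs.biUnion (fun v => univ.filter (fun w => A v w)) := by
      by_contra hh
      push_neg at hh
      have : (fs.biUnion (fun v => univ.filter (fun w => A v w))) = univ :=
        eq_univ_iff_forall.mpr hh
      rw [this, card_univ] at hc
      omega
    have h3 : (univ.filter (fun v => A v u)) ⊆ univ \ fs := by
      intro x hx
      rw [mem_filter] at hx
      refine mem_sdiff.mpr ⟨mem_univ _, fun hxf => hu ?_⟩
      exact mem_biUnion.mpr ⟨x, hxf, mem_filter.mpr ⟨mem_univ _, hx.2⟩⟩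
    have h4 := card_le_card h3
    rw [card_sdiff_of_subset (subset_univ _), card_univ] at h4
    have h5 := hin u
    have h6 := hout v₀
    omega
  obtain ⟨f, hfinj, hf⟩ :=
    (Finset.all_card_le_biUnion_card_iff_exists_injective
      (fun v => univ.filter (fun w => A v w))).mp hall1
  let σ : Equiv.Perm V := Equiv.ofBijective f (Finite.injective_iff_bijective.mp hfinj)
  have hσ : ∀ v, A v (σ v) := fun v => (mem_filter.mp (hf v)).2
  set t' : V → Finset V := fun v => (univ.filter (fun w => A v w)).erase (σ v) with ht'
  by_cases hH : ∀ fs : Finset V, fs.card ≤ (fs.biUnion t').card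
  · obtain ⟨g, hginj, hg⟩ :=
      (Finset.all_card_le_biUnion_card_iff_exists_injective t').mp hH
    refine ⟨σ, Equiv.ofBijective g (Finite.injective_iff_bijective.mp hginj), hσ, ?_, ?_⟩
    · intro v
      exact (mem_filter.mp (mem_of_mem_erase (hg v))).2
    · intro v
      exact (ne_of_mem_erase (hg v)).symm
  · push_neg at hH
    obtain ⟨s, hviol⟩ := hH
    set NS := s.biUnion t' with hNSdef
    obtain ⟨v₀, hv₀⟩ := card_pos.mp (lt_of_le_of_lt (Nat.zero_le _) hviol)
    have htsub : ∀ v ∈ s, t' v ⊆ NS := fun v hv => subset_biUnion_of_mem _ hv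
    have ht'card : ∀ v : V, (univ.filter (fun w => A v w)).card ≤ (t' v).card + 1 := by
      intro v
      have h2 : (univ.filter (fun w => A v w)) ⊆ insert (σ v) (t' v) :=
        subset_insert_iff.mpr (Finset.Subset.refl _)
      have := card_le_card h2
      have := card_insert_le (σ v) (t' v)
      omega
    have hNS1 : Fintype.card V + 1 ≤ 2 * NS.card + 2 := by
      have := hout v₀
      have := ht'card v₀
      have := card_le_card (htsub v₀ hv₀)
      omega
    have hscard : s.card ≤ Fintype.card V := card_le_univ s
    have hexu : ∃ u, u ∉ NS := by
      by_contra hh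
      push_neg at hh
      have : NS = univ := eq_univ_iff_forall.mpr hh
      rw [this, card_univ] at hviol
      omega
    have hBsub : ∀ u, u ∉ NS →
        (univ.filter (fun v => A v u)) ⊆ insert (σ.symm u) (univ \ s) := by
      intro u hu x hx
      rw [mem_filter] at hx
      by_cases hxs : x ∈ s
      · have : u = σ x := by
          by_contra hne
          exact hu (htsub x hxs (mem_erase.mpr ⟨hne, mem_filter.mpr ⟨mem_univ _, hx.2⟩⟩))
        have : σ.symm u = x := by rw [this, Equiv.symm_apply_apply]
        exact this ▸ mem_insert_self _ _
      · exact mem_insert_of_mem (mem_sdiff.mpr ⟨mem_univ _, hxs⟩)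
    have hBcard : ∀ u, u ∉ NS →
        (univ.filter (fun v => A v u)).card ≤ Fintype.card V - s.card + 1 := by
      intro u hu
      have h4 := card_le_card (hBsub u hu)
      have h5 := card_insert_le (σ.symm u) (univ \ s)
      rw [card_sdiff_of_subset (subset_univ _), card_univ] at h5
      omega
    have hscard_le : 2 * s.card ≤ Fintype.card V + 1 := by
      obtain ⟨u, hu⟩ := hexu
      have := hBcard u hu
      have := hin u
      omega
    set m := NS.card with hmdef
    have hsm : s.card = m + 1 := by omega
    have hnm : Fintype.card V = 2 * m + 1 := by omega
    have hm1 : 1 ≤ m := by omega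
    have hteq : ∀ v ∈ s, t' v = NS := by
      intro v hv
      refine eq_of_subset_of_card_le (htsub v hv) ?_
      have := hout v
      have := ht'card v
      omega
    have F1 : ∀ v ∈ s, ∀ w ∈ NS, A v w := by
      intro v hv w hw
      have : w ∈ t' v := (hteq v hv) ▸ hw
      exact (mem_filter.mp (mem_of_mem_erase this)).2
    have F2 : ∀ v ∈ s, σ v ∉ NS := by
      intro v hv hc
      have : σ v ∈ t' v := (hteq v hv) ▸ hc
      exact (ne_of_mem_erase this) rfl
    have himg : s.image σ = univ \ NS := by
      apply eq_of_subset_of_card_le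
      · intro y hy
        obtain ⟨v, hv, rfl⟩ := mem_image.mp hy
        exact mem_sdiff.mpr ⟨mem_univ _, F2 v hv⟩
      · rw [card_sdiff_of_subset (subset_univ _), card_univ,
          card_image_of_injective _ σ.injective]
        omega
    have F3 : ∀ x, x ∉ s → σ x ∈ NS := by
      intro x hx
      by_contra hc
      have : σ x ∈ s.image σ := himg ▸ (mem_sdiff.mpr ⟨mem_univ _, hc⟩)
      obtain ⟨v, hv, hveq⟩ := mem_image.mp this
      exact hx ((σ.injective hveq) ▸ hv)
    have F4 : ∀ x, x ∉ s → ∀ u, u ∉ NS → A x u := by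
      intro x hx u hu
      have hBeq : (univ.filter (fun v => A v u)) = insert (σ.symm u) (univ \ s) := by
        apply eq_of_subset_of_card_le (hBsub u hu)
        have h5 := card_insert_le (σ.symm u) (univ \ s)
        rw [card_sdiff_of_subset (subset_univ _), card_univ] at h5
        have := hin u
        omega
      have : x ∈ insert (σ.symm u) (univ \ s) :=
        mem_insert_of_mem (mem_sdiff.mpr ⟨mem_univ _, hx⟩)
      rw [← hBeq] at this
      exact (mem_filter.mp this).2
    -- build the two permutations
    have hcard1 : Fintype.card {x // x ∈ s} = m + 1 := by
      rw [Fintype.card_coe]; exact hsm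
    have hcard2 : Fintype.card {x // ¬ x ∈ s} = m := by
      rw [Fintype.card_subtype_compl, Fintype.card_coe, hsm]
      omega
    let e1 : {x // x ∈ s} ≃ Fin (m+1) := Fintype.equivFinOfCardEq hcard1
    let e2 : {x // ¬ x ∈ s} ≃ Fin m := Fintype.equivFinOfCardEq hcard2
    let E : (Fin (m+1) ⊕ Fin m) ≃ V :=
      (Equiv.sumCongr e1.symm e2.symm).trans (Equiv.sumCompl (fun x => x ∈ s))
    have hEs : ∀ i, E (Sum.inl i) ∈ s := by
      intro i
      have : E (Sum.inl i) = ((e1.symm i : {x // x ∈ s}) : V) := by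
        simp [E]
      rw [this]
      exact (e1.symm i).2
    have hEc : ∀ j, E (Sum.inr j) ∉ s := by
      intro j
      have : E (Sum.inr j) = ((e2.symm j : {x // ¬ x ∈ s}) : V) := by
        simp [E]
      rw [this]
      exact (e2.symm j).2
    let π₁ : Equiv.Perm (Fin (m+1) ⊕ Fin m) :=
      Function.Involutive.toPerm _ (swapFunA_inv m)
    let π₂ : Equiv.Perm (Fin (m+1) ⊕ Fin m) :=
      Function.Involutive.toPerm _ (swapFunB_inv m)
    let ρ₁ : Equiv.Perm V := E.permCongr π₁
    let ρ₂ : Equiv.Perm V := E.permCongr π₂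
    have hρ₁ : ∀ v, ρ₁ v = E (swapFunA m (E.symm v)) := by
      intro v; simp [ρ₁, π₁, Equiv.permCongr_apply, Function.Involutive.coe_toPerm]
    have hρ₂ : ∀ v, ρ₂ v = E (swapFunB m (E.symm v)) := by
      intro v; simp [ρ₂, π₂, Equiv.permCongr_apply, Function.Involutive.coe_toPerm]
    refine ⟨ρ₁.trans σ, ρ₂.trans σ, ?_, ?_, ?_⟩
    · intro v
      have hv : E (E.symm v) = v := E.apply_symm_apply v
      show A v (σ (ρ₁ v))
      rw [hρ₁]
      rcases hw : E.symm v with i | j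
      · have hvs : v ∈ s := by rw [← hv, hw]; exact hEs i
        by_cases hi : i = 0
        · have heq : swapFunA m (Sum.inl i) = Sum.inl i := by simp [swapFunA, hi]
          have hEi : E (Sum.inl i) = v := by rw [← hw]; exact hv
          rw [heq, hEi]
          exact hσ v
        · have : swapFunA m (Sum.inl i) = Sum.inr (i.pred hi) := by simp [swapFunA, hi]
          rw [this]
          exact F1 v hvs _ (F3 _ (hEc _))
      · have hvc : v ∉ s := by rw [← hv, hw]; exact hEc j
        have : swapFunA m (Sum.inr j) = Sum.inl j.succ := by simp [swapFunA]
        rw [this]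
        exact F4 v hvc _ (F2 _ (hEs _))
    · intro v
      have hv : E (E.symm v) = v := E.apply_symm_apply v
      show A v (σ (ρ₂ v))
      rw [hρ₂]
      rcases hw : E.symm v with i | j
      · have hvs : v ∈ s := by rw [← hv, hw]; exact hEs i
        by_cases hi : (i : ℕ) < m
        · have : swapFunB m (Sum.inl i) = Sum.inr ⟨i, hi⟩ := by simp [swapFunB, hi]
          rw [this]
          exact F1 v hvs _ (F3 _ (hEc _))
        · have heq : swapFunB m (Sum.inl i) = Sum.inl i := by simp [swapFunB, hi]
          have hEi : E (Sum.inl i) = v := by rw [← hw]; exact hv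
          rw [heq, hEi]
          exact hσ v
      · have hvc : v ∉ s := by rw [← hv, hw]; exact hEc j
        have : swapFunB m (Sum.inr j) = Sum.inl ⟨j, Nat.lt_succ_of_lt j.isLt⟩ := by
          simp [swapFunB]
        rw [this]
        exact F4 v hvc _ (F2 _ (hEs _))
    · intro v
      show σ (ρ₁ v) ≠ σ (ρ₂ v)
      rw [hρ₁, hρ₂]
      exact σ.injective.ne (E.injective.ne (swap_ne m hm1 (E.symm v)))
end
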